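/- If a signed series-parallel graph G' is of series type (i.e., G' is a series connection of its parts) and both of its endparts are unbalanced, then every edge of G' is contained in a barbell. -/

import Mathlib

/-!
Signed multigraphs (parallel edges allowed), two-terminal graphs,
series/parallel connections and flows, following the terminology of
Kaiser–Rollová, "Nowhere-zero flows in signed series-parallel graphs".

Vertices and edges are labelled by natural numbers.  An edge `e` has the
two endvertices `fst e` and `snd e` (its two half-edges are the ends at
`fst e` and at `snd e`), and `sign e = true` means that `e` is positive.
-/

/-- The value `+1` (pointing towards its endvertex) or `-1` (pointing away)
of a Boolean direction of a half-edge. -/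
def dirVal (b : Bool) : ℤ := if b then 1 else -1

/-- A signed multigraph. -/
structure SignedGraph where
  verts : Finset ℕ
  edges : Finset ℕ
  fst : ℕ → ℕ
  snd : ℕ → ℕ
  sign : ℕ → Bool
  fst_mem : ∀ e ∈ edges, fst e ∈ verts
  snd_mem : ∀ e ∈ edges, snd e ∈ verts

namespace SignedGraph

/-- Edge `e` joins the vertices `u` and `v`. -/
def Joins (G : SignedGraph) (e u v : ℕ) : Prop :=
  (G.fst e = u ∧ G.snd e = v) ∨ (G.fst e = v ∧ G.snd e = u)

/-- `u` and `v` are adjacent (joined by some edge). -/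
def Adj (G : SignedGraph) (u v : ℕ) : Prop := ∃ e ∈ G.edges, G.Joins e u v

/-- The degree of a vertex (each incidence of an edge counts once,
so loops count twice). -/
def degree (G : SignedGraph) (v : ℕ) : ℕ :=
  ∑ e ∈ G.edges, ((if G.fst e = v then 1 else 0) + (if G.snd e = v then 1 else 0))

/-- `e` and `f` are parallel edges: distinct edges joining the same
pair of vertices. -/
def Parallel (G : SignedGraph) (e f : ℕ) : Prop :=
  e ≠ f ∧ ((G.fst e = G.fst f ∧ G.snd e = G.snd f) ∨
           (G.fst e = G.snd f ∧ G.snd e = G.fst f))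

/-- `v` is contained in a 2-cycle (a cycle formed by two parallel edges). -/
def In2Cycle (G : SignedGraph) (v : ℕ) : Prop :=
  ∃ e ∈ G.edges, ∃ f ∈ G.edges, G.Parallel e f ∧ G.fst e ≠ G.snd e ∧
    (G.fst e = v ∨ G.snd e = v)

/-- `beta G` is the number of distinct 2-cycles of `G`. -/
def beta (G : SignedGraph) : ℕ :=
  ((G.edges ×ˢ G.edges).filter fun p => p.1 < p.2 ∧ G.fst p.1 ≠ G.snd p.1 ∧
     ((G.fst p.1 = G.fst p.2 ∧ G.snd p.1 = G.snd p.2) ∨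
      (G.fst p.1 = G.snd p.2 ∧ G.snd p.1 = G.fst p.2))).card

/-- An orientation of a signed graph: `o₁ e` (resp. `o₂ e`) tells whether the
half-edge of `e` at `fst e` (resp. at `snd e`) points towards its endvertex.
Of the two half-edges of a positive edge exactly one points towards its
endvertex, while for a negative edge none or both do. -/
def IsOrientation (G : SignedGraph) (o₁ o₂ : ℕ → Bool) : Prop :=
  ∀ e ∈ G.edges, (G.sign e = true → o₁ e ≠ o₂ e) ∧ (G.sign e = false → o₁ e = o₂ e)

/-- The excess (inflow minus outflow) at a vertex `v`. -/
def excess (G : SignedGraph) (o₁ o₂ : ℕ → Bool) (φ : ℕ → ℤ) (v : ℕ) : ℤ :=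
  ∑ e ∈ G.edges, ((if G.fst e = v then dirVal (o₁ e) * φ e else 0) +
                  (if G.snd e = v then dirVal (o₂ e) * φ e else 0))

/-- `(o₁, o₂, φ)` is a nowhere-zero `k`-flow on `G`: an orientation together
with a valuation of the edges by nonzero integers of absolute value less
than `k` such that at every vertex the inflow equals the outflow. -/
structure IsNZFlow (G : SignedGraph) (k : ℕ) (o₁ o₂ : ℕ → Bool) (φ : ℕ → ℤ) : Prop where
  orient : G.IsOrientation o₁ o₂
  nonzero : ∀ e ∈ G.edges, φ e ≠ 0
  bounded : ∀ e ∈ G.edges, |φ e| < (k : ℤ)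
  conserve : ∀ v ∈ G.verts, G.excess o₁ o₂ φ v = 0

/-- `G` admits a nowhere-zero `k`-flow. -/
def HasNZFlow (G : SignedGraph) (k : ℕ) : Prop := ∃ o₁ o₂ φ, G.IsNZFlow k o₁ o₂ φ

/-- `G` is flow-admissible: it admits a nowhere-zero `k`-flow for some `k`. -/
def FlowAdmissible (G : SignedGraph) : Prop := ∃ k, G.HasNZFlow k

/-- `(vs, es)` is a cycle of `G`: distinct vertices `vs = [v₀, …, v_{m-1}]`,
distinct edges `es = [e₀, …, e_{m-1}]`, where `eᵢ` joins `vᵢ` and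
`v_{i+1 (mod m)}`. -/
structure IsCycle (G : SignedGraph) (vs es : List ℕ) : Prop where
  nonempty : es ≠ []
  len : vs.length = es.length
  vnodup : vs.Nodup
  enodup : es.Nodup
  vmem : ∀ v ∈ vs, v ∈ G.verts
  emem : ∀ e ∈ es, e ∈ G.edges
  link : ∀ i < es.length,
    G.Joins (es.getD i 0) (vs.getD i 0) (vs.getD ((i + 1) % vs.length) 0)

/-- The number of negative edges in a list of edges. -/
def negCount (G : SignedGraph) (es : List ℕ) : ℕ :=
  (es.filter fun e => G.sign e = false).length

/-- A balanced cycle: a cycle with an even number of negative edges. -/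
def IsBalancedCycle (G : SignedGraph) (vs es : List ℕ) : Prop :=
  G.IsCycle vs es ∧ Even (G.negCount es)

/-- An unbalanced cycle: a cycle with an odd number of negative edges. -/
def IsUnbalancedCycle (G : SignedGraph) (vs es : List ℕ) : Prop :=
  G.IsCycle vs es ∧ Odd (G.negCount es)

/-- A signed graph is unbalanced if it contains an unbalanced cycle. -/
def IsUnbalanced (G : SignedGraph) : Prop := ∃ vs es, G.IsUnbalancedCycle vs es

/-- `(vs, es)` is a path of `G` (possibly trivial, i.e. a single vertex). -/
structure IsPath (G : SignedGraph) (vs es : List ℕ) : Prop where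
  nonempty : vs ≠ []
  len : vs.length = es.length + 1
  vnodup : vs.Nodup
  enodup : es.Nodup
  vmem : ∀ v ∈ vs, v ∈ G.verts
  emem : ∀ e ∈ es, e ∈ G.edges
  link : ∀ i < es.length, G.Joins (es.getD i 0) (vs.getD i 0) (vs.getD (i + 1) 0)

/-- A barbell: two edge-disjoint unbalanced cycles together with a path,
which either joins two vertex-disjoint cycles and is internally
vertex-disjoint from them, or is the trivial path at the single
common vertex of the two cycles. -/
structure IsBarbell (G : SignedGraph) (vs₁ es₁ vs₂ es₂ pvs pes : List ℕ) : Prop where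
  cyc1 : G.IsUnbalancedCycle vs₁ es₁
  cyc2 : G.IsUnbalancedCycle vs₂ es₂
  edge_disj : ∀ e ∈ es₁, e ∉ es₂
  path : G.IsPath pvs pes
  shape :
    ((∀ v ∈ vs₁, v ∉ vs₂) ∧
      pvs.getD 0 0 ∈ vs₁ ∧ pvs.getD (pvs.length - 1) 0 ∈ vs₂ ∧
      (∀ i, 0 < i → i < pvs.length - 1 → pvs.getD i 0 ∉ vs₁ ∧ pvs.getD i 0 ∉ vs₂)) ∨
    (∃ w, w ∈ vs₁ ∧ w ∈ vs₂ ∧ (∀ v ∈ vs₁, v ∈ vs₂ → v = w) ∧ pvs = [w] ∧ pes = [])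

/-- The edge `e` is contained in a signed circuit (a balanced cycle
or a barbell). -/
def InSignedCircuit (G : SignedGraph) (e : ℕ) : Prop :=
  (∃ vs es, G.IsBalancedCycle vs es ∧ e ∈ es) ∨
  (∃ vs₁ es₁ vs₂ es₂ pvs pes, G.IsBarbell vs₁ es₁ vs₂ es₂ pvs pes ∧
    (e ∈ es₁ ∨ e ∈ es₂ ∨ e ∈ pes))

/-- `H` is a subgraph of `G` (with the same labels, endvertices and signs). -/
def IsSubgraph (H G : SignedGraph) : Prop :=
  H.verts ⊆ G.verts ∧ H.edges ⊆ G.edges ∧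
  ∀ e ∈ H.edges, H.fst e = G.fst e ∧ H.snd e = G.snd e ∧ H.sign e = G.sign e

/-- Switching at a vertex `v`: the signs of all edges incident with `v`
(i.e. with exactly one end at `v`) are inverted. -/
def switchAt (G : SignedGraph) (v : ℕ) : SignedGraph where
  verts := G.verts
  edges := G.edges
  fst := G.fst
  snd := G.snd
  sign := fun e => if xor (G.fst e == v) (G.snd e == v) then !(G.sign e) else G.sign e
  fst_mem := G.fst_mem
  snd_mem := G.snd_mem

/-- Connectedness of a (nonempty) signed graph. -/
def Connected (G : SignedGraph) : Prop :=
  G.verts.Nonempty ∧ ∀ u ∈ G.verts, ∀ v ∈ G.verts, Relation.ReflTransGen G.Adj u v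

/-- Deletion of a vertex together with all incident edges. -/
def deleteVert (G : SignedGraph) (v : ℕ) : SignedGraph where
  verts := G.verts.erase v
  edges := G.edges.filter fun e => G.fst e ≠ v ∧ G.snd e ≠ v
  fst := G.fst
  snd := G.snd
  sign := G.sign
  fst_mem := by
    intro e he
    simp only [Finset.mem_filter] at he
    exact Finset.mem_erase.mpr ⟨he.2.1, G.fst_mem e he.1⟩
  snd_mem := by
    intro e he
    simp only [Finset.mem_filter] at he
    exact Finset.mem_erase.mpr ⟨he.2.2, G.snd_mem e he.1⟩

/-- `G` is 2-connected: it is connected and remains connected after the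
deletion of any single vertex. -/
def TwoConnected (G : SignedGraph) : Prop :=
  G.Connected ∧ ∀ v ∈ G.verts, (G.deleteVert v).Connected

end SignedGraph

/-- A two-terminal signed graph: a signed graph with two distinguished
distinct vertices, the source terminal `s` and the target terminal `t`. -/
structure TTGraph extends SignedGraph where
  s : ℕ
  t : ℕ
  s_mem : s ∈ verts
  t_mem : t ∈ verts
  s_ne_t : s ≠ t

namespace TTGraph

/-- Switching at a vertex of a two-terminal signed graph. -/
def switchAt (G : TTGraph) (v : ℕ) : TTGraph where
  toSignedGraph := G.toSignedGraph.switchAt v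
  s := G.s
  t := G.t
  s_mem := G.s_mem
  t_mem := G.t_mem
  s_ne_t := G.s_ne_t

end TTGraph

/-- Two two-terminal signed graphs are switching equivalent if one is
obtained from the other by a finite sequence of switchings. -/
def SwitchEquiv (G G' : TTGraph) : Prop :=
  Relation.ReflTransGen (fun A B => ∃ v ∈ A.verts, B = A.switchAt v) G G'

/-- `G` is the series connection `S(H₁, H₂)`: `H₁` and `H₂` are subgraphs
of `G` sharing exactly the vertex `H₁.t = H₂.s`, partitioning the edges,
with `G.s = H₁.s` and `G.t = H₂.t`. -/
structure IsSeriesConn2 (G H₁ H₂ : TTGraph) : Prop where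
  sub1 : SignedGraph.IsSubgraph H₁.toSignedGraph G.toSignedGraph
  sub2 : SignedGraph.IsSubgraph H₂.toSignedGraph G.toSignedGraph
  vert_union : H₁.verts ∪ H₂.verts = G.verts
  vert_inter : H₁.verts ∩ H₂.verts = {H₁.t}
  mid : H₁.t = H₂.s
  edge_union : H₁.edges ∪ H₂.edges = G.edges
  edge_disj : Disjoint H₁.edges H₂.edges
  src : G.s = H₁.s
  tgt : G.t = H₂.t

/-- `G` is the parallel connection `P(H₁, H₂)`: `H₁` and `H₂` are subgraphs
of `G` sharing exactly the two terminals, partitioning the edges, with the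
terminals of `G`, `H₁` and `H₂` identified. -/
structure IsParallelConn2 (G H₁ H₂ : TTGraph) : Prop where
  sub1 : SignedGraph.IsSubgraph H₁.toSignedGraph G.toSignedGraph
  sub2 : SignedGraph.IsSubgraph H₂.toSignedGraph G.toSignedGraph
  vert_union : H₁.verts ∪ H₂.verts = G.verts
  vert_inter : H₁.verts ∩ H₂.verts = {H₁.s, H₁.t}
  src_eq : H₁.s = H₂.s
  tgt_eq : H₁.t = H₂.t
  edge_union : H₁.edges ∪ H₂.edges = G.edges
  edge_disj : Disjoint H₁.edges H₂.edges
  src : G.s = H₁.s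
  tgt : G.t = H₁.t

/-- `G` is a (signed) copy of `K₂`: a single edge joining the two terminals. -/
def IsSignedK2 (G : TTGraph) : Prop :=
  G.verts = {G.s, G.t} ∧ ∃ e, G.edges = {e} ∧ G.toSignedGraph.Joins e G.s G.t

/-- Series-parallel two-terminal graphs: obtained from copies of `K₂` by
iterated series and parallel connections. -/
inductive IsSP : TTGraph → Prop
  | k2 {G} : IsSignedK2 G → IsSP G
  | series {G H₁ H₂} : IsSeriesConn2 G H₁ H₂ → IsSP H₁ → IsSP H₂ → IsSP G
  | parallel {G H₁ H₂} : IsParallelConn2 G H₁ H₂ → IsSP H₁ → IsSP H₂ → IsSP G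

/-- `G` is the series connection `S(H₁, …, Hₙ)` of the graphs in the list
(of length at least two). -/
inductive IsSeriesConnList : TTGraph → List TTGraph → Prop
  | two {G H₁ H₂} : IsSeriesConn2 G H₁ H₂ → IsSeriesConnList G [H₁, H₂]
  | cons {G G' H l} : IsSeriesConn2 G H G' → IsSeriesConnList G' l →
      IsSeriesConnList G (H :: l)

/-- `G` is the parallel connection `P(H₁, …, Hₙ)` of the graphs in the list
(of length at least two). -/
inductive IsParallelConnList : TTGraph → List TTGraph → Prop
  | two {G H₁ H₂} : IsParallelConn2 G H₁ H₂ → IsParallelConnList G [H₁, H₂]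
  | cons {G G' H l} : IsParallelConn2 G H G' → IsParallelConnList G' l →
      IsParallelConnList G (H :: l)

/-- `l` is the list of parts of `G` for a series connection: `G` is a series
connection of the series-parallel graphs in `l`, with `l` of maximum length. -/
def IsSeriesPartsOf (G : TTGraph) (l : List TTGraph) : Prop :=
  IsSeriesConnList G l ∧ (∀ H ∈ l, IsSP H) ∧
  ∀ l', IsSeriesConnList G l' → (∀ H ∈ l', IsSP H) → l'.length ≤ l.length

/-- `l` is the list of parts of `G` for a parallel connection. -/
def IsParallelPartsOf (G : TTGraph) (l : List TTGraph) : Prop :=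
  IsParallelConnList G l ∧ (∀ H ∈ l, IsSP H) ∧
  ∀ l', IsParallelConnList G l' → (∀ H ∈ l', IsSP H) → l'.length ≤ l.length

/-- `l` is the list of parts of `G`. -/
def IsPartsOf (G : TTGraph) (l : List TTGraph) : Prop :=
  IsSeriesPartsOf G l ∨ IsParallelPartsOf G l

/-- `H` is a part of `G`. -/
def IsPart (H G : TTGraph) : Prop := ∃ l, IsPartsOf G l ∧ H ∈ l

/-- `H` is a piece of `G`: there is a sequence `H = H₀, H₁, …, Hₘ = G`
where each `Hⱼ` is a part of `H_{j+1}`; in particular `G` is a piece of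
itself. -/
def IsPiece (H G : TTGraph) : Prop := Relation.ReflTransGen IsPart H G

/-- `G` is of series type: it is a series connection of its parts. -/
def IsSeriesType (G : TTGraph) : Prop := ∃ l, IsSeriesPartsOf G l

/-- `G` is of parallel type: it is a parallel connection of its parts. -/
def IsParallelType (G : TTGraph) : Prop := ∃ l, IsParallelPartsOf G l

/-- `H` is an endpart of `G`: the first or last part of a series
decomposition of `G` into its parts. -/
def IsEndpartOf (H G : TTGraph) : Prop :=
  ∃ l, IsSeriesPartsOf G l ∧ (l.head? = some H ∨ l.getLast? = some H)

/-- `DepthLe G d`: the depth of `G` is at most `d`.  The depth of a signed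
`K₂` is `0`; otherwise it is `1` plus the maximum depth of a part. -/
inductive DepthLe : TTGraph → ℕ → Prop
  | k2 {G d} : IsSignedK2 G → DepthLe G d
  | step {G l d} : IsPartsOf G l → (∀ H ∈ l, DepthLe H d) → DepthLe G (d + 1)

/-- `HasDepth G d`: the depth of `G` is exactly `d`, i.e. `d` is the least
upper bound in the recursive definition of depth. -/
def HasDepth (G : TTGraph) (d : ℕ) : Prop :=
  DepthLe G d ∧ ∀ d' < d, ¬ DepthLe G d'

/-- `G` is reduced: each non-terminal vertex has degree at least `3`, and
no two parallel edges have the same sign. -/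
def IsReducedGraph (G : TTGraph) : Prop :=
  (∀ v ∈ G.verts, v ≠ G.s → v ≠ G.t → 3 ≤ G.toSignedGraph.degree v) ∧
  (∀ e ∈ G.edges, ∀ f ∈ G.edges, G.toSignedGraph.Parallel e f → G.sign e ≠ G.sign f)

/-- `G` is a positive `K₂` (denoted `K₂⁺`). -/
def IsPositiveK2 (G : TTGraph) : Prop :=
  IsSignedK2 G ∧ ∀ e ∈ G.edges, G.sign e = true

/-- `G` is the unbalanced 2-cycle `D`: two parallel edges of opposite signs
joining the two terminals. -/
def IsUnbalanced2Cycle (G : TTGraph) : Prop :=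
  G.verts = {G.s, G.t} ∧ ∃ e f, e ≠ f ∧ G.edges = {e, f} ∧
    G.toSignedGraph.Joins e G.s G.t ∧ G.toSignedGraph.Joins f G.s G.t ∧
    G.sign e ≠ G.sign f

/-- `G` is a string: a copy of `K₂⁺` or `D`, or a series connection of copies
of `K₂⁺` and `D`, in which every non-terminal vertex lies in a 2-cycle. -/
def IsString (G : TTGraph) : Prop :=
  (IsPositiveK2 G ∨ IsUnbalanced2Cycle G ∨
    ∃ l, IsSeriesConnList G l ∧ ∀ H ∈ l, IsPositiveK2 H ∨ IsUnbalanced2Cycle H) ∧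
  ∀ v ∈ G.verts, v ≠ G.s → v ≠ G.t → G.toSignedGraph.In2Cycle v

/-- `G` is a necklace: a parallel connection of two strings, at least one of
which is nontrivial (has more than two vertices). -/
def IsNecklace (G : TTGraph) : Prop :=
  ∃ H₁ H₂, IsParallelConn2 G H₁ H₂ ∧ IsString H₁ ∧ IsString H₂ ∧
    (2 < H₁.verts.card ∨ 2 < H₂.verts.card)

/-- `(o₁, o₂, φ)` is an `(a,b)`-pseudoflow on the two-terminal signed graph
`G`: like a nowhere-zero 6-flow, except that at the source terminal the
outflow exceeds the inflow by `a`, and at the target terminal the inflow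
exceeds the outflow by `b`. -/
structure IsPseudoflow (G : TTGraph) (a b : ℤ) (o₁ o₂ : ℕ → Bool) (φ : ℕ → ℤ) :
    Prop where
  orient : G.toSignedGraph.IsOrientation o₁ o₂
  nonzero : ∀ e ∈ G.edges, φ e ≠ 0
  bounded : ∀ e ∈ G.edges, |φ e| < 6
  conserve : ∀ v ∈ G.verts, v ≠ G.s → v ≠ G.t →
    G.toSignedGraph.excess o₁ o₂ φ v = 0
  out_s : G.toSignedGraph.excess o₁ o₂ φ G.s = -a
  in_t : G.toSignedGraph.excess o₁ o₂ φ G.t = b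

/-- `G` admits an `(a,b)`-pseudoflow. -/
def HasPseudoflow (G : TTGraph) (a b : ℤ) : Prop :=
  ∃ o₁ o₂ φ, IsPseudoflow G a b o₁ o₂ φ

/-- `I₅ = {-5, …, 5}`. -/
noncomputable def I5 : Finset ℤ := Finset.Icc (-5) 5

/-- The pair `(a,b)` is valid for `G`: `a ≠ 0` or `deg(s) ≥ 2`, and
`b ≠ 0` or `deg(t) ≥ 2`. -/
def ValidPair (G : TTGraph) (a b : ℤ) : Prop :=
  (a ≠ 0 ∨ 2 ≤ G.toSignedGraph.degree G.s) ∧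
  (b ≠ 0 ∨ 2 ≤ G.toSignedGraph.degree G.t)

/-- `G` is a flow-admissible signed series-parallel graph with no
nowhere-zero 6-flow, with the minimum number of edges among all such
graphs. -/
def MinCounterexample (G : TTGraph) : Prop :=
  IsSP G ∧ G.toSignedGraph.FlowAdmissible ∧ ¬ G.toSignedGraph.HasNZFlow 6 ∧
  ∀ G' : TTGraph, IsSP G' → G'.toSignedGraph.FlowAdmissible →
    ¬ G'.toSignedGraph.HasNZFlow 6 → G.edges.card ≤ G'.edges.card

/-- `W` is a copy of `S(K₂⁺, D, K₂⁺)`. -/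
def IsSK2DK2 (W : TTGraph) : Prop :=
  ∃ A B C, IsSeriesConnList W [A, B, C] ∧ IsPositiveK2 A ∧
    IsUnbalanced2Cycle B ∧ IsPositiveK2 C

/-- `G'` is obtained from `G` by replacing the piece `H` (with terminals
`H.s`, `H.t`) by the two-terminal graph `W`: the edges and non-terminal
vertices of `H` are removed, `W` (whose new vertices are fresh) is added,
and its terminals are identified with the terminals of `H`. -/
def IsReplacement (G H G' W : TTGraph) : Prop :=
  W.s = H.s ∧ W.t = H.t ∧ G'.s = G.s ∧ G'.t = G.t ∧
  W.verts ∩ G.verts ⊆ {H.s, H.t} ∧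
  G'.verts = (G.verts \ (H.verts \ {H.s, H.t})) ∪ W.verts ∧
  G'.edges = (G.edges \ H.edges) ∪ W.edges ∧
  Disjoint (G.edges \ H.edges) W.edges ∧
  (∀ e ∈ G.edges \ H.edges,
    G'.fst e = G.fst e ∧ G'.snd e = G.snd e ∧ G'.sign e = G.sign e) ∧
  SignedGraph.IsSubgraph W.toSignedGraph G'.toSignedGraph

namespace SignedGraph

lemma Joins.symm' {G : SignedGraph} {e u v : ℕ} (h : G.Joins e u v) : G.Joins e v u := by
  rcases h with h | h
  · exact Or.inr h
  · exact Or.inl h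

lemma Joins.fst_cases {G : SignedGraph} {e u v : ℕ} (h : G.Joins e u v) :
    G.fst e = u ∨ G.fst e = v := by rcases h with h | h
                                    · exact Or.inl h.1
                                    · exact Or.inr h.1

lemma Joins.snd_cases {G : SignedGraph} {e u v : ℕ} (h : G.Joins e u v) :
    G.snd e = u ∨ G.snd e = v := by rcases h with h | h
                                    · exact Or.inr h.2
                                    · exact Or.inl h.2

/-- A linked walk: consecutive vertices are joined by the corresponding edges. -/
inductive Linked (G : SignedGraph) : List ℕ → List ℕ → Prop
  | nil (v : ℕ) : Linked G [v] []
  | cons {u v : ℕ} {vs es : List ℕ} {e : ℕ} :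
      G.Joins e u v → Linked G (v :: vs) es → Linked G (u :: v :: vs) (e :: es)

namespace Linked

lemma ne_nil {G : SignedGraph} {vs es : List ℕ} (h : G.Linked vs es) : vs ≠ [] := by
  cases h <;> simp

lemma length_eq {G : SignedGraph} {vs es : List ℕ} (h : G.Linked vs es) :
    vs.length = es.length + 1 := by
  induction h with
  | nil v => simp
  | cons hj _ ih => simpa using ih

lemma endpoints_mem {G : SignedGraph} {vs es : List ℕ} (h : G.Linked vs es)
    {e : ℕ} (he : e ∈ es) : G.fst e ∈ vs ∧ G.snd e ∈ vs := by
  induction h with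
  | nil v => simp at he
  | cons hj hl ih =>
    rename_i u v vs' es' e'
    rcases List.mem_cons.mp he with rfl | he'
    · constructor
      · rcases hj.fst_cases with h | h <;> simp [h]
      · rcases hj.snd_cases with h | h <;> simp [h]
    · exact ⟨List.mem_cons_of_mem _ (ih he').1, List.mem_cons_of_mem _ (ih he').2⟩

lemma edge_ne {G : SignedGraph} {vs es : List ℕ} (h : G.Linked vs es)
    (hnd : vs.Nodup) {e : ℕ} (he : e ∈ es) : G.fst e ≠ G.snd e := by
  induction h with
  | nil v => simp at he
  | cons hj hl ih =>
    rename_i u v vs' es' e'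
    rcases List.mem_cons.mp he with rfl | he'
    · have huv : u ≠ v := by
        intro h'; subst h'; simp at hnd
      rcases hj with ⟨h1, h2⟩ | ⟨h1, h2⟩ <;> rw [h1, h2]
      · exact huv
      · exact huv.symm
    · exact ih (List.Nodup.of_cons hnd) he'

lemma enodup {G : SignedGraph} {vs es : List ℕ} (h : G.Linked vs es)
    (hnd : vs.Nodup) : es.Nodup := by
  induction h with
  | nil v => simp
  | cons hj hl ih =>
    rename_i u v vs' es' e'
    refine List.nodup_cons.mpr ⟨?_, ih (List.Nodup.of_cons hnd)⟩
    intro hmem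
    have hm := hl.endpoints_mem hmem
    have hu : u ∉ v :: vs' := (List.nodup_cons.mp hnd).1
    rcases hj with ⟨h1, h2⟩ | ⟨h1, h2⟩
    · exact hu (h1 ▸ hm.1)
    · exact hu (h2 ▸ hm.2)

lemma head?_eq {G : SignedGraph} {u v : ℕ} {vs es : List ℕ}
    (h : G.Linked (u :: vs) es) : (u :: vs).head? = some u := rfl

lemma append {G : SignedGraph} {vs₁ es₁ vs₂ es₂ : List ℕ} {b : ℕ}
    (h₁ : G.Linked vs₁ es₁) (hb : vs₁.getLast? = some b)
    (h₂ : G.Linked (b :: vs₂) es₂) :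
    G.Linked (vs₁ ++ vs₂) (es₁ ++ es₂) := by
  induction h₁ with
  | nil v =>
    simp only [List.getLast?_singleton, Option.some.injEq] at hb
    subst hb; simpa using h₂
  | cons hj hl ih =>
    rename_i u v vs' es' e'
    have hb' : (v :: vs').getLast? = some b := by
      rw [← hb]; simp [List.getLast?_cons_cons]
    exact Linked.cons hj (ih hb')

lemma snoc {G : SignedGraph} {vs es : List ℕ} {b c e : ℕ}
    (h : G.Linked vs es) (hb : vs.getLast? = some b) (hj : G.Joins e b c) :
    G.Linked (vs ++ [c]) (es ++ [e]) :=
  h.append hb (Linked.cons hj (Linked.nil c))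

lemma reverse {G : SignedGraph} {vs es : List ℕ} (h : G.Linked vs es) :
    G.Linked vs.reverse es.reverse := by
  induction h with
  | nil v => simpa using Linked.nil v
  | cons hj hl ih =>
    rename_i u v vs' es' e'
    have : (v :: vs').reverse.getLast? = some v := by
      simp [List.getLast?_reverse]
    simpa using ih.snoc this hj.symm'

lemma getD_link {G : SignedGraph} {vs es : List ℕ} (h : G.Linked vs es) :
    ∀ i < es.length, G.Joins (es.getD i 0) (vs.getD i 0) (vs.getD (i + 1) 0) := by
  induction h with
  | nil v => intro i hi; simp at hi
  | cons hj hl ih =>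
    rename_i u v vs' es' e'
    intro i hi
    match i with
    | 0 => simpa using hj
    | (j + 1) =>
      have hj' : j < es'.length := by simpa using hi
      simpa using ih j hj'

lemma of_getD {G : SignedGraph} : ∀ (vs es : List ℕ), vs.length = es.length + 1 →
    (∀ i < es.length, G.Joins (es.getD i 0) (vs.getD i 0) (vs.getD (i + 1) 0)) →
    G.Linked vs es := by
  intro vs
  induction vs with
  | nil => intro es h; simp at h
  | cons u vs' ih =>
    intro es hlen hlink
    match vs', es with
    | [], [] => exact Linked.nil u
    | [], e :: es' => simp at hlen
    | v :: vs'', [] => simp at hlen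
    | v :: vs'', e :: es' =>
      refine Linked.cons ?_ (ih es' (by simpa using hlen) ?_)
      · simpa using hlink 0 (by simp)
      · intro i hi
        simpa using hlink (i + 1) (by simpa using Nat.succ_lt_succ hi)

end Linked

end SignedGraph
namespace SignedGraph

lemma mem_of_getLast? {α : Type*} {l : List α} {x : α} (h : l.getLast? = some x) : x ∈ l := by
  cases l with
  | nil => simp at h
  | cons u t =>
    rw [List.getLast?_eq_getLast (l := u :: t) (by simp)] at h
    simp at h
    rw [← h]
    exact List.getLast_mem (by simp)

/-- A good path from `a` to `b`. -/
structure GP (G : SignedGraph) (a b : ℕ) (vs es : List ℕ) : Prop where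
  linked : G.Linked vs es
  ha : vs.head? = some a
  hb : vs.getLast? = some b
  vnodup : vs.Nodup
  vmem : ∀ v ∈ vs, v ∈ G.verts
  emem : ∀ e ∈ es, e ∈ G.edges

namespace GP

lemma ne_nil {G : SignedGraph} {a b : ℕ} {vs es : List ℕ} (h : G.GP a b vs es) :
    vs ≠ [] := h.linked.ne_nil

lemma a_mem {G : SignedGraph} {a b : ℕ} {vs es : List ℕ} (h : G.GP a b vs es) :
    a ∈ vs := by
  have hha := h.ha
  cases vs with
  | nil => simp at hha
  | cons u t => simp at hha; rw [← hha]; exact List.mem_cons_self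

lemma b_mem {G : SignedGraph} {a b : ℕ} {vs es : List ℕ} (h : G.GP a b vs es) :
    b ∈ vs := SignedGraph.mem_of_getLast? h.hb

lemma single {G : SignedGraph} {a : ℕ} (hmem : a ∈ G.verts) : G.GP a a [a] [] :=
  ⟨Linked.nil a, rfl, rfl, by simp, by simpa using hmem, by simp⟩

lemma a_vert {G : SignedGraph} {a b : ℕ} {vs es : List ℕ} (h : G.GP a b vs es) :
    a ∈ G.verts := h.vmem a h.a_mem

lemma b_vert {G : SignedGraph} {a b : ℕ} {vs es : List ℕ} (h : G.GP a b vs es) :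
    b ∈ G.verts := h.vmem b h.b_mem

/-- A path whose two endpoints coincide is trivial. -/
lemma eq_single {G : SignedGraph} {a : ℕ} {vs es : List ℕ} (h : G.GP a a vs es) :
    vs = [a] ∧ es = [] := by
  have hha := h.ha
  have hhb := h.hb
  have hnd := h.vnodup
  cases vs with
  | nil => simp at hha
  | cons u t =>
    simp at hha
    cases t with
    | nil =>
      have : u = a := hha
      refine ⟨by rw [this], ?_⟩
      cases h.linked with
      | nil => rfl
    | cons v t' =>
      exfalso
      have hlast : (v :: t').getLast? = some a := by
        rw [← hhb]; simp [List.getLast?_cons_cons]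
      have hmem : a ∈ v :: t' := SignedGraph.mem_of_getLast? hlast
      have hu : u ∉ v :: t' := (List.nodup_cons.mp hnd).1
      rw [hha] at hu
      exact hu hmem

lemma concat {G : SignedGraph} {a b c : ℕ} {vs₁ es₁ vs₂ es₂ : List ℕ}
    (h₁ : G.GP a b vs₁ es₁) (h₂ : G.GP b c vs₂ es₂)
    (hint : ∀ v ∈ vs₁, v ∈ vs₂ → v = b) :
    G.GP a c (vs₁ ++ vs₂.tail) (es₁ ++ es₂) := by
  obtain ⟨t₂, ht₂⟩ : ∃ t₂, vs₂ = b :: t₂ := by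
    cases vs₂ with
    | nil => exact absurd h₂.ha (by simp)
    | cons u t => have := h₂.ha; simp at this; exact ⟨t, by rw [this]⟩
  constructor
  · exact h₁.linked.append h₁.hb (by rw [ht₂] at h₂; simpa [ht₂] using h₂.linked)
  · rw [List.head?_append_of_ne_nil _ h₁.ne_nil]; exact h₁.ha
  · cases htt : vs₂.tail with
    | nil =>
      have ht0 : t₂ = [] := by rw [ht₂] at htt; simpa using htt
      have h2b := h₂.hb
      rw [ht₂, ht0] at h2b
      simp at h2b
      simp only [htt, List.append_nil]
      rw [← h2b]; exact h₁.hb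
    | cons w tw =>
      rw [List.getLast?_append_of_ne_nil _ (by simp : (w :: tw : List ℕ) ≠ [])]
      have ht : t₂ = w :: tw := by rw [ht₂] at htt; simpa using htt
      have h2b := h₂.hb
      rw [ht₂, ht, List.getLast?_cons_cons] at h2b
      exact h2b
  · rw [List.nodup_append']
    refine ⟨h₁.vnodup, ?_, ?_⟩
    · exact h₂.vnodup.sublist (List.tail_sublist _)
    · intro v hv1 hv2
      have hvb : v = b := hint v hv1 (List.mem_of_mem_tail hv2)
      have h2nd : (b :: t₂).Nodup := ht₂ ▸ h₂.vnodup
      have hbt : b ∉ t₂ := (List.nodup_cons.mp h2nd).1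
      have hvt : v ∈ t₂ := by rw [ht₂] at hv2; simpa using hv2
      exact hbt (hvb ▸ hvt)
  · intro v hv
    rcases List.mem_append.mp hv with hv | hv
    · exact h₁.vmem v hv
    · exact h₂.vmem v (List.mem_of_mem_tail hv)
  · intro e he
    rcases List.mem_append.mp he with he | he
    · exact h₁.emem e he
    · exact h₂.emem e he

lemma reverse {G : SignedGraph} {a b : ℕ} {vs es : List ℕ} (h : G.GP a b vs es) :
    G.GP b a vs.reverse es.reverse := by
  refine ⟨h.linked.reverse, ?_, ?_, (List.nodup_reverse.mpr h.vnodup), ?_, ?_⟩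
  · rw [List.head?_reverse]; exact h.hb
  · rw [List.getLast?_reverse]; exact h.ha
  · intro v hv; exact h.vmem v (List.mem_reverse.mp hv)
  · intro e he; exact h.emem e (List.mem_reverse.mp he)

end GP

lemma Joins.lift {H G : SignedGraph} (hsub : H.IsSubgraph G) {e u v : ℕ}
    (he : e ∈ H.edges) (h : H.Joins e u v) : G.Joins e u v := by
  obtain ⟨hfst, hsnd, _⟩ := hsub.2.2 e he
  rcases h with ⟨h1, h2⟩ | ⟨h1, h2⟩
  · exact Or.inl ⟨hfst ▸ h1, hsnd ▸ h2⟩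
  · exact Or.inr ⟨hfst ▸ h1, hsnd ▸ h2⟩

lemma Linked.lift {H G : SignedGraph} (hsub : H.IsSubgraph G) {vs es : List ℕ}
    (h : H.Linked vs es) (hes : ∀ e ∈ es, e ∈ H.edges) : G.Linked vs es := by
  induction h with
  | nil v => exact Linked.nil v
  | cons hj hl ih =>
    refine Linked.cons (hj.lift hsub (hes _ (by simp))) (ih fun e he => hes e (by simp [he]))

lemma GP.lift {H G : SignedGraph} (hsub : H.IsSubgraph G) {a b : ℕ} {vs es : List ℕ}
    (h : H.GP a b vs es) : G.GP a b vs es :=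
  ⟨h.linked.lift hsub h.emem, h.ha, h.hb, h.vnodup,
    fun v hv => hsub.1 (h.vmem v hv), fun e he => hsub.2.1 (h.emem e he)⟩

lemma Linked.trunc {G : SignedGraph} {vs es : List ℕ} (h : G.Linked vs es)
    (p : ℕ → Bool) (hx : ∃ x ∈ vs, p x = true) :
    ∃ vs' es' x, G.Linked vs' es' ∧ vs'.head? = vs.head? ∧ vs'.getLast? = some x ∧
      p x = true ∧ (∀ v ∈ vs'.dropLast, p v = false) ∧ vs' <+: vs ∧ es' <+: es := by
  induction h with
  | nil v =>
    obtain ⟨x, hx1, hx2⟩ := hx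
    simp at hx1; subst hx1
    exact ⟨[x], [], x, Linked.nil x, rfl, rfl, hx2, by simp, List.prefix_refl _,
      List.prefix_refl _⟩
  | cons hj hl ih =>
    rename_i u v vs' es' e
    by_cases hu : p u = true
    · exact ⟨[u], [], u, Linked.nil u, rfl, rfl, hu, by simp, ⟨v :: vs', rfl⟩, ⟨e :: es', rfl⟩⟩
    · have hx' : ∃ x ∈ v :: vs', p x = true := by
        obtain ⟨x, hx1, hx2⟩ := hx
        rcases List.mem_cons.mp hx1 with rfl | hx1
        · exact absurd hx2 hu
        · exact ⟨x, hx1, hx2⟩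
      obtain ⟨ws, fs, x, hlink, hhead, hlast, hpx, hdrop, hprev, hpree⟩ := ih hx'
      obtain ⟨tws, rfl⟩ : ∃ tws, ws = v :: tws := by
        cases ws with
        | nil => simp at hhead
        | cons w tw => simp at hhead; exact ⟨tw, by rw [hhead]⟩
      refine ⟨u :: v :: tws, e :: fs, x, Linked.cons hj hlink, rfl, ?_, hpx, ?_, ?_, ?_⟩
      · rw [← hlast]; simp [List.getLast?_cons_cons]
      · intro w hw
        rcases List.mem_cons.mp (by simpa using hw) with rfl | hw'
        · simpa using hu
        · exact hdrop w (by simpa using hw')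
      · exact List.cons_prefix_cons.mpr ⟨rfl, hprev⟩
      · exact List.cons_prefix_cons.mpr ⟨rfl, hpree⟩

/-- Truncate a path at the first vertex satisfying `p`. -/
lemma GP.firstHit {G : SignedGraph} {a b : ℕ} {vs es : List ℕ} (h : G.GP a b vs es)
    (p : ℕ → Bool) (hx : ∃ x ∈ vs, p x = true) :
    ∃ x vs' es', G.GP a x vs' es' ∧ p x = true ∧
      (∀ v ∈ vs', p v = true → v = x) ∧ (∀ v ∈ vs', v ∈ vs) ∧ (∀ e ∈ es', e ∈ es) := by
  obtain ⟨vs', es', x, hlink, hhead, hlast, hpx, hdrop, hprev, hpree⟩ := h.linked.trunc p hx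
  refine ⟨x, vs', es', ⟨hlink, by rw [hhead]; exact h.ha, hlast,
    h.vnodup.sublist hprev.sublist, fun v hv => h.vmem v (hprev.sublist.mem hv),
    fun e he => h.emem e (hpree.sublist.mem he)⟩, hpx, ?_, fun v hv => hprev.sublist.mem hv,
    fun e he => hpree.sublist.mem he⟩
  intro v hv hpv
  have hne : vs' ≠ [] := hlink.ne_nil
  have hsplit : vs'.dropLast ++ [vs'.getLast hne] = vs' := List.dropLast_append_getLast hne
  have hxl : vs'.getLast hne = x := by
    rw [List.getLast?_eq_getLast hne] at hlast; simpa using hlast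
  rw [← hsplit] at hv
  rcases List.mem_append.mp hv with hv | hv
  · exact absurd (hdrop v hv) (by simp [hpv])
  · simp at hv; rw [hv, hxl]

/-- Truncate a path at the last vertex satisfying `p`. -/
lemma GP.lastHit {G : SignedGraph} {a b : ℕ} {vs es : List ℕ} (h : G.GP a b vs es)
    (p : ℕ → Bool) (hx : ∃ x ∈ vs, p x = true) :
    ∃ x vs' es', G.GP x b vs' es' ∧ p x = true ∧
      (∀ v ∈ vs', p v = true → v = x) ∧ (∀ v ∈ vs', v ∈ vs) ∧ (∀ e ∈ es', e ∈ es) := by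
  obtain ⟨x, vs', es', hgp, hpx, huniq, hsubv, hsube⟩ := h.reverse.firstHit p
    (by obtain ⟨x, h1, h2⟩ := hx; exact ⟨x, List.mem_reverse.mpr h1, h2⟩)
  refine ⟨x, vs'.reverse, es'.reverse, by simpa using hgp.reverse, hpx, ?_, ?_, ?_⟩
  · intro v hv; exact huniq v (List.mem_reverse.mp hv)
  · intro v hv; exact List.mem_reverse.mp (hsubv v (List.mem_reverse.mp hv))
  · intro e he; exact List.mem_reverse.mp (hsube e (List.mem_reverse.mp he))

end SignedGraph
namespace SignedGraph

/-- A good cycle: a closed linked walk on distinct vertices and edges. -/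
structure GC (G : SignedGraph) (vs es : List ℕ) : Prop where
  hne : vs ≠ []
  linked : G.Linked (vs ++ [vs.headI]) es
  vnodup : vs.Nodup
  enodup : es.Nodup
  vmem : ∀ v ∈ vs, v ∈ G.verts
  emem : ∀ e ∈ es, e ∈ G.edges

namespace GC

lemma len {G : SignedGraph} {vs es : List ℕ} (h : G.GC vs es) :
    vs.length = es.length := by
  have := h.linked.length_eq
  simpa using this

lemma es_ne_nil {G : SignedGraph} {vs es : List ℕ} (h : G.GC vs es) : es ≠ [] := by
  intro he
  have := h.len
  rw [he] at this
  simp at this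
  exact h.hne this

lemma headI_mem {G : SignedGraph} {vs es : List ℕ} (h : G.GC vs es) : vs.headI ∈ vs := by
  cases vs with
  | nil => exact absurd rfl h.hne
  | cons u t => simp

lemma lift {H G : SignedGraph} (hsub : H.IsSubgraph G) {vs es : List ℕ}
    (h : H.GC vs es) : G.GC vs es :=
  ⟨h.hne, h.linked.lift hsub h.emem, h.vnodup, h.enodup,
    fun v hv => hsub.1 (h.vmem v hv), fun e he => hsub.2.1 (h.emem e he)⟩

lemma toIsCycle {G : SignedGraph} {vs es : List ℕ} (h : G.GC vs es) :
    G.IsCycle vs es := by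
  refine ⟨h.es_ne_nil, h.len, h.vnodup, h.enodup, h.vmem, h.emem, ?_⟩
  intro i hi
  have hi' : i < es.length := hi
  have hlink := h.linked.getD_link i hi'
  have hlen : vs.length = es.length := h.len
  have h0 : 0 < vs.length := List.length_pos_iff.mpr h.hne
  have hvs1 : (vs ++ [vs.headI]).getD i 0 = vs.getD i 0 := by
    rw [List.getD_append _ _ _ _ (by omega)]
  have key : vs.getD ((i + 1) % vs.length) 0 = (vs ++ [vs.headI]).getD (i + 1) 0 := by
    by_cases hlast : i + 1 = vs.length
    · have hvs2 : (vs ++ [vs.headI]).getD (i + 1) 0 = vs.headI := by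
        rw [hlast]
        rw [List.getD_eq_getElem?_getD, List.getElem?_append_right (by omega)]
        simp
      have hmod : (i + 1) % vs.length = 0 := by rw [hlast]; simp
      have hhead : vs.headI = vs.getD 0 0 := by
        cases vs with
        | nil => exact absurd rfl h.hne
        | cons u t => simp
      rw [hmod, hvs2, ← hhead]
    · have hlt : i + 1 < vs.length := by omega
      have hvs2 : (vs ++ [vs.headI]).getD (i + 1) 0 = vs.getD (i + 1) 0 := by
        rw [List.getD_append _ _ _ _ hlt]
      rw [Nat.mod_eq_of_lt hlt, hvs2]
  rw [key, ← hvs1]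
  exact hlink

lemma ofIsCycle {G : SignedGraph} {vs es : List ℕ} (h : G.IsCycle vs es) :
    G.GC vs es := by
  have h0 : vs ≠ [] := by
    intro hv
    have := h.len
    rw [hv] at this
    simp at this
    exact h.nonempty (List.length_eq_zero_iff.mp this.symm)
  have hpos : 0 < vs.length := List.length_pos_iff.mpr h0
  refine ⟨h0, ?_, h.vnodup, h.enodup, h.vmem, h.emem⟩
  have hlen := h.len
  apply Linked.of_getD
  · simp [h.len]
  · intro i hi
    have hlink := h.link i hi
    have hvs1 : (vs ++ [vs.headI]).getD i 0 = vs.getD i 0 := by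
      rw [List.getD_append _ _ _ _ (by omega : i < vs.length)]
    · rw [hvs1]
      by_cases hlast : i + 1 = vs.length
      · have hvs2 : (vs ++ [vs.headI]).getD (i + 1) 0 = vs.headI := by
          rw [hlast, List.getD_eq_getElem?_getD, List.getElem?_append_right (by omega)]
          simp
        have hmod : (i + 1) % vs.length = 0 := by rw [hlast]; simp
        have hhead : vs.headI = vs.getD 0 0 := by
          cases vs with
          | nil => exact absurd rfl h0
          | cons u t => simp
        rw [hvs2, hhead]
        rw [hmod] at hlink
        exact hlink
      · have hlt : i + 1 < vs.length := by
          have := h.len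
          omega
        have hvs2 : (vs ++ [vs.headI]).getD (i + 1) 0 = vs.getD (i + 1) 0 := by
          rw [List.getD_append _ _ _ _ hlt]
        rw [hvs2]
        rw [Nat.mod_eq_of_lt hlt] at hlink
        exact hlink

/-- Glue two internally disjoint `s`–`t` paths into a cycle. -/
lemma ofTwoPaths {G : SignedGraph} {s t : ℕ} {vs₁ es₁ vs₂ es₂ : List ℕ}
    (h₁ : G.GP s t vs₁ es₁) (h₂ : G.GP s t vs₂ es₂) (hst : s ≠ t)
    (hint : ∀ v ∈ vs₁, v ∈ vs₂ → v = s ∨ v = t)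
    (hdisj : ∀ e ∈ es₁, e ∉ es₂) :
    G.GC (vs₁ ++ vs₂.reverse.tail.dropLast) (es₁ ++ es₂.reverse) ∧
      (∀ v ∈ vs₁ ++ vs₂.reverse.tail.dropLast, v ∈ vs₁ ∨ v ∈ vs₂) := by
  obtain ⟨t₂, ht₂⟩ : ∃ t₂, vs₂ = s :: t₂ := by
    cases vs₂ with
    | nil => exact absurd h₂.ha (by simp)
    | cons u tl => have := h₂.ha; simp at this; exact ⟨tl, by rw [this]⟩
  have ht₂ne : t₂ ≠ [] := by
    intro h0
    rw [ht₂, h0] at h₂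
    have := h₂.hb
    simp at this
    exact hst this
  -- the reversed second path starts at t and ends at s
  have hrev := h₂.reverse
  have hrne : vs₂.reverse ≠ [] := by simp [ht₂]
  obtain ⟨rt, hrt⟩ : ∃ rt, vs₂.reverse = t :: rt := by
    cases hv : vs₂.reverse with
    | nil => exact absurd hv hrne
    | cons u tl =>
      have := hrev.ha
      rw [hv] at this
      simp at this
      exact ⟨tl, by rw [this]⟩
  have hrtne : rt ≠ [] := by
    intro h0
    rw [h0] at hrt
    have : vs₂ = [t] := by
      have := congrArg List.reverse hrt
      simpa using this
    rw [this] at h₂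
    have := h₂.ha
    simp at this
    exact hst this.symm
  -- last of rt is s
  have hrts : rt.getLast? = some s := by
    obtain ⟨w, tw, rfl⟩ : ∃ w tw, rt = w :: tw := by
      cases rt with
      | nil => exact absurd rfl hrtne
      | cons w tw => exact ⟨w, tw, rfl⟩
    have hb := hrev.hb
    rw [hrt, List.getLast?_cons_cons] at hb
    exact hb
  have htail : vs₂.reverse.tail = rt := by rw [hrt]; rfl
  have hrvnd : vs₂.reverse.Nodup := List.nodup_reverse.mpr h₂.vnodup
  have hrtnd : rt.Nodup := by
    rw [hrt] at hrvnd; exact (List.nodup_cons.mp hrvnd).2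
  have htnrt : t ∉ rt := by
    have h' : vs₂.reverse.Nodup := List.nodup_reverse.mpr h₂.vnodup
    rw [hrt] at h'; exact (List.nodup_cons.mp h').1
  have hgl : rt.getLast hrtne = s := by
    rw [List.getLast?_eq_getLast hrtne] at hrts
    simpa using hrts
  have hmid : rt.dropLast ++ [s] = rt := by
    conv_rhs => rw [← List.dropLast_append_getLast hrtne, hgl]
  have hsnm : s ∉ rt.dropLast := by
    intro hs
    have h2 := hrtnd
    rw [← hmid] at h2
    exact (List.disjoint_right.mp (List.nodup_append'.mp h2).2.2) (by simp) hs
  have hdl_sub : ∀ v ∈ rt.dropLast, v ∈ vs₂ := by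
    intro v hv
    have h1 : v ∈ rt := (List.dropLast_sublist rt).mem hv
    have h2 : v ∈ vs₂.reverse := by rw [hrt]; exact List.mem_cons_of_mem _ h1
    exact List.mem_reverse.mp h2
  obtain ⟨t₁, ht₁⟩ : ∃ t₁, vs₁ = s :: t₁ := by
    cases vs₁ with
    | nil => exact absurd h₁.ha (by simp)
    | cons u tl => have := h₁.ha; simp at this; exact ⟨tl, by rw [this]⟩
  have hheadI : (vs₁ ++ vs₂.reverse.tail.dropLast).headI = s := by rw [ht₁]; rfl
  have hlink2 : G.Linked (vs₁ ++ rt) (es₁ ++ es₂.reverse) := by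
    apply h₁.linked.append h₁.hb
    have hl := h₂.linked.reverse
    rw [hrt] at hl
    exact hl
  have hclosed : (vs₁ ++ vs₂.reverse.tail.dropLast) ++
      [(vs₁ ++ vs₂.reverse.tail.dropLast).headI] = vs₁ ++ rt := by
    rw [hheadI, htail, List.append_assoc, hmid]
  refine ⟨⟨by simp [ht₁], by rw [hclosed]; exact hlink2, ?_, ?_, ?_, ?_⟩, ?_⟩
  · rw [List.nodup_append', htail]
    refine ⟨h₁.vnodup, hrtnd.sublist (List.dropLast_sublist rt), ?_⟩
    intro v hv1 hv2
    rcases hint v hv1 (hdl_sub v hv2) with rfl | rfl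
    · exact hsnm hv2
    · exact htnrt ((List.dropLast_sublist rt).mem hv2)
  · rw [List.nodup_append']
    refine ⟨h₁.linked.enodup h₁.vnodup,
      List.nodup_reverse.mpr (h₂.linked.enodup h₂.vnodup), ?_⟩
    intro e he1 he2
    exact hdisj e he1 (List.mem_reverse.mp he2)
  · intro v hv
    rcases List.mem_append.mp hv with hv | hv
    · exact h₁.vmem v hv
    · exact h₂.vmem v (hdl_sub v (htail ▸ hv))
  · intro e he
    rcases List.mem_append.mp he with he | he
    · exact h₁.emem e he
    · exact h₂.emem e (List.mem_reverse.mp he)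
  · intro v hv
    rcases List.mem_append.mp hv with hv | hv
    · exact Or.inl hv
    · exact Or.inr (hdl_sub v (htail ▸ hv))

end GC

end SignedGraph
namespace SignedGraph

lemma negCount_append (G : SignedGraph) (l1 l2 : List ℕ) :
    G.negCount (l1 ++ l2) = G.negCount l1 + G.negCount l2 := by
  simp [negCount, List.filter_append]

lemma negCount_reverse (G : SignedGraph) (l : List ℕ) :
    G.negCount l.reverse = G.negCount l := by
  simp [negCount, List.filter_reverse]

lemma negCount_congr {H G : SignedGraph} (hsub : H.IsSubgraph G) {es : List ℕ}
    (hes : ∀ e ∈ es, e ∈ H.edges) : G.negCount es = H.negCount es := by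
  unfold negCount
  congr 1
  apply List.filter_congr
  intro e he
  have := (hsub.2.2 e (hes e he)).2.2
  simp [this]

/-- A proper 2-colouring witnessing balance. -/
def Consistent (G : SignedGraph) (κ : ℕ → Bool) : Prop :=
  ∀ e ∈ G.edges, G.sign e = (κ (G.fst e) == κ (G.snd e))

lemma Consistent.joins_sign {G : SignedGraph} {κ : ℕ → Bool} (hκ : G.Consistent κ)
    {e u v : ℕ} (he : e ∈ G.edges) (hj : G.Joins e u v) :
    G.sign e = (κ u == κ v) := by
  rcases hj with ⟨h1, h2⟩ | ⟨h1, h2⟩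
  · rw [hκ e he, h1, h2]
  · rw [hκ e he, h1, h2, Bool.beq_comm]

lemma parity_linked {G : SignedGraph} {κ : ℕ → Bool} (hκ : G.Consistent κ) :
    ∀ {vs es : List ℕ}, G.Linked vs es → (∀ e ∈ es, e ∈ G.edges) →
    ∀ {a b : ℕ}, vs.head? = some a → vs.getLast? = some b →
    (Even (G.negCount es) ↔ κ a = κ b) := by
  intro vs es h
  induction h with
  | nil v =>
    intro _ a b ha hb
    simp at ha hb
    rw [← ha, ← hb]
    simp [negCount]
  | cons hj hl ih =>
    rename_i u v vs' es' e
    intro hes a b ha hb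
    simp at ha
    have hb' : (v :: vs').getLast? = some b := by
      rw [← hb]; simp [List.getLast?_cons_cons]
    have ihv := ih (fun e' he' => hes e' (List.mem_cons_of_mem _ he')) rfl hb'
    have hsign : G.sign e = (κ u == κ v) :=
      hκ.joins_sign (hes e (by simp)) hj
    have hcount : G.negCount (e :: es') =
        G.negCount es' + (if G.sign e = false then 1 else 0) := by
      simp only [negCount, List.filter_cons]
      by_cases hse : G.sign e = false <;> simp [hse, Nat.add_comm]
    rw [← ha, hcount, hsign]
    cases hKu : κ u <;> cases hKv : κ v <;> cases hKb : κ b <;>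
      simp_all [Nat.even_add_one]

lemma parity_gp {G : SignedGraph} {κ : ℕ → Bool} (hκ : G.Consistent κ)
    {a b : ℕ} {vs es : List ℕ} (h : G.GP a b vs es) :
    (Even (G.negCount es) ↔ κ a = κ b) :=
  parity_linked hκ h.linked h.emem h.ha h.hb

lemma consistent_no_unbalanced {G : SignedGraph} (hκ : ∃ κ, G.Consistent κ) :
    ¬ G.IsUnbalanced := by
  rintro ⟨vs, es, hcyc, hodd⟩
  obtain ⟨κ, hκ⟩ := hκ
  have gc := GC.ofIsCycle hcyc
  obtain ⟨u, tl, rfl⟩ : ∃ u tl, vs = u :: tl := by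
    cases vs with
    | nil => exact absurd rfl gc.hne
    | cons u tl => exact ⟨u, tl, rfl⟩
  have heven : Even (G.negCount es) := by
    have := parity_linked hκ gc.linked gc.emem (a := (u :: tl).headI)
      (b := (u :: tl).headI) (by simp) (by rw [List.getLast?_append_of_ne_nil _ (by simp)]; simp)
    rw [this]
  rw [← Nat.not_even_iff_odd] at hodd
  exact hodd heven

end SignedGraph
namespace SignedGraph

lemma IsSubgraph.trans {A B C : SignedGraph} (h1 : A.IsSubgraph B) (h2 : B.IsSubgraph C) :
    A.IsSubgraph C := by
  refine ⟨h1.1.trans h2.1, h1.2.1.trans h2.2.1, ?_⟩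
  intro e he
  obtain ⟨a1, a2, a3⟩ := h1.2.2 e he
  obtain ⟨b1, b2, b3⟩ := h2.2.2 e (h1.2.1 he)
  exact ⟨a1.trans b1, a2.trans b2, a3.trans b3⟩

lemma unbalanced_lift {H G : SignedGraph} (hsub : H.IsSubgraph G)
    (h : H.IsUnbalanced) : G.IsUnbalanced := by
  obtain ⟨vs, es, hcyc, hodd⟩ := h
  have gc := GC.ofIsCycle hcyc
  refine ⟨vs, es, (gc.lift hsub).toIsCycle, ?_⟩
  rwa [negCount_congr hsub gc.emem]

end SignedGraph

section SPBasics

lemma k2_not_unbalanced {G : TTGraph} (h : IsSignedK2 G) :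
    ¬ G.toSignedGraph.IsUnbalanced := by
  rintro ⟨vs, es, hcyc, hodd⟩
  obtain ⟨hverts, e₀, hedges, hjoin⟩ := h
  have gc := SignedGraph.GC.ofIsCycle hcyc
  have hall : ∀ f ∈ es, f = e₀ := by
    intro f hf
    have := gc.emem f hf
    rw [hedges] at this
    simpa using this
  obtain ⟨f, fs, rfl⟩ : ∃ f fs, es = f :: fs := by
    cases es with
    | nil => exact absurd rfl gc.es_ne_nil
    | cons f fs => exact ⟨f, fs, rfl⟩
  have hfs : fs = [] := by
    cases fs with
    | nil => rfl
    | cons g gs =>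
      exfalso
      have h1 : f = e₀ := hall f (by simp)
      have h2 : g = e₀ := hall g (by simp)
      have := gc.enodup
      rw [h1, h2] at this
      simp at this
  subst hfs
  have hlen : vs.length = 1 := by simpa using gc.len
  obtain ⟨v, rfl⟩ : ∃ v, vs = [v] := by
    cases vs with
    | nil => simp at hlen
    | cons v tl =>
      simp at hlen
      exact ⟨v, by rw [hlen]⟩
  have hlink := gc.linked
  simp only [List.headI] at hlink
  cases hlink with
  | cons hj hl =>
    have hf : f = e₀ := hall f (by simp)
    rw [hf] at hj
    have : G.s = G.t := by
      rcases hj with ⟨j1, j2⟩ | ⟨j1, j2⟩ <;>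
        rcases hjoin with ⟨k1, k2⟩ | ⟨k1, k2⟩ <;> omega
    exact G.s_ne_t this

lemma sp_edges_nonempty {G : TTGraph} (h : IsSP G) : G.edges.Nonempty := by
  induction h with
  | k2 hk2 =>
    obtain ⟨_, e, he, _⟩ := hk2
    exact ⟨e, by rw [he]; simp⟩
  | series hconn h1 h2 ih1 ih2 =>
    obtain ⟨e, he⟩ := ih1
    exact ⟨e, by rw [← hconn.edge_union]; exact Finset.mem_union_left _ he⟩
  | parallel hconn h1 h2 ih1 ih2 =>
    obtain ⟨e, he⟩ := ih1
    exact ⟨e, by rw [← hconn.edge_union]; exact Finset.mem_union_left _ he⟩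

/-- Every edge of a series-parallel graph lies on an `s`–`t` path. -/
lemma sp_path_through {G : TTGraph} (h : IsSP G) :
    ∀ e ∈ G.edges, ∃ vs es, G.toSignedGraph.GP G.s G.t vs es ∧ e ∈ es ∧
      (∀ v ∈ vs, v ∈ G.verts) := by
  induction h with
  | k2 hk2 =>
    rename_i G0
    intro e he
    obtain ⟨hverts, e₀, hedges, hjoin⟩ := hk2
    have he0 : e = e₀ := by rw [hedges] at he; simpa using he
    refine ⟨[G0.s, G0.t], [e₀], ⟨?_, rfl, rfl, ?_, ?_, ?_⟩, by simp [he0], ?_⟩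
    · exact SignedGraph.Linked.cons hjoin (SignedGraph.Linked.nil _)
    · simp [G0.s_ne_t]
    · intro v hv
      rw [hverts]
      simpa using hv
    · intro f hf
      rw [hedges]
      simpa using hf
    · intro v hv
      rw [hverts]
      simpa using hv
  | series hconn h1 h2 ih1 ih2 =>
    rename_i G' H₁ H₂
    intro e he
    rw [← hconn.edge_union] at he
    have hmid := hconn.mid
    have hinter := hconn.vert_inter
    have hjunction : ∀ v ∈ H₁.verts, v ∈ H₂.verts → v = H₁.t := by
      intro v hv1 hv2
      have : v ∈ H₁.verts ∩ H₂.verts := Finset.mem_inter.mpr ⟨hv1, hv2⟩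
      rw [hinter] at this
      simpa using this
    rcases Finset.mem_union.mp he with he | he
    · obtain ⟨vs₁, es₁, hp₁, hein, hv₁⟩ := ih1 e he
      obtain ⟨f, hf⟩ := sp_edges_nonempty h2
      obtain ⟨vs₂, es₂, hp₂, _, hv₂⟩ := ih2 f hf
      have hp₁' := hp₁.lift hconn.sub1
      have hp₂' := hp₂.lift hconn.sub2
      rw [← hmid] at hp₂'
      have hcat := hp₁'.concat hp₂' (fun v hv hv' => hjunction v (hv₁ v hv) (hv₂ v hv'))
      refine ⟨vs₁ ++ vs₂.tail, es₁ ++ es₂, ?_, by simp [hein], ?_⟩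
      · rw [hconn.src, hconn.tgt]; exact hcat
      intro v hv
      rcases List.mem_append.mp hv with hv | hv
      · rw [← hconn.vert_union]; exact Finset.mem_union_left _ (hv₁ v hv)
      · rw [← hconn.vert_union]
        exact Finset.mem_union_right _ (hv₂ v (List.mem_of_mem_tail hv))
    · obtain ⟨f, hf⟩ := sp_edges_nonempty h1
      obtain ⟨vs₁, es₁, hp₁, _, hv₁⟩ := ih1 f hf
      obtain ⟨vs₂, es₂, hp₂, hein, hv₂⟩ := ih2 e he
      have hp₁' := hp₁.lift hconn.sub1
      have hp₂' := hp₂.lift hconn.sub2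
      rw [← hmid] at hp₂'
      have hcat := hp₁'.concat hp₂' (fun v hv hv' => hjunction v (hv₁ v hv) (hv₂ v hv'))
      refine ⟨vs₁ ++ vs₂.tail, es₁ ++ es₂, ?_, by simp [hein], ?_⟩
      · rw [hconn.src, hconn.tgt]; exact hcat
      intro v hv
      rcases List.mem_append.mp hv with hv | hv
      · rw [← hconn.vert_union]; exact Finset.mem_union_left _ (hv₁ v hv)
      · rw [← hconn.vert_union]
        exact Finset.mem_union_right _ (hv₂ v (List.mem_of_mem_tail hv))
  | parallel hconn h1 h2 ih1 ih2 =>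
    rename_i G' H₁ H₂
    intro e he
    rw [← hconn.edge_union] at he
    rcases Finset.mem_union.mp he with he | he
    · obtain ⟨vs₁, es₁, hp₁, hein, hv₁⟩ := ih1 e he
      refine ⟨vs₁, es₁, by rw [hconn.src, hconn.tgt]; exact hp₁.lift hconn.sub1, hein, ?_⟩
      intro v hv
      rw [← hconn.vert_union]; exact Finset.mem_union_left _ (hv₁ v hv)
    · obtain ⟨vs₂, es₂, hp₂, hein, hv₂⟩ := ih2 e he
      refine ⟨vs₂, es₂, ?_, hein, ?_⟩
      · rw [hconn.src, hconn.tgt, hconn.src_eq, hconn.tgt_eq]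
        exact hp₂.lift hconn.sub2
      · intro v hv
        rw [← hconn.vert_union]; exact Finset.mem_union_right _ (hv₂ v hv)

/-- A series-parallel graph has an `s`–`t` path. -/
lemma sp_path {G : TTGraph} (h : IsSP G) :
    ∃ vs es, G.toSignedGraph.GP G.s G.t vs es ∧ (∀ v ∈ vs, v ∈ G.verts) := by
  obtain ⟨e, he⟩ := sp_edges_nonempty h
  obtain ⟨vs, es, hp, _, hv⟩ := sp_path_through h e he
  exact ⟨vs, es, hp, hv⟩

end SPBasics
section Connectivity

open SignedGraph

/-- In a series-parallel graph, every vertex is reachable from `s`. -/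
lemma sp_path_from_s {G : TTGraph} (h : IsSP G) :
    ∀ v ∈ G.verts, ∃ vs es, G.toSignedGraph.GP G.s v vs es := by
  induction h with
  | k2 hk2 =>
    rename_i G0
    intro v hv
    obtain ⟨hverts, e₀, hedges, hjoin⟩ := hk2
    rw [hverts] at hv
    simp at hv
    rcases hv with rfl | rfl
    · exact ⟨[G0.s], [], GP.single (by rw [hverts]; simp)⟩
    · refine ⟨[G0.s, G0.t], [e₀], ⟨?_, rfl, rfl, by simp [G0.s_ne_t], ?_, ?_⟩⟩
      · exact Linked.cons hjoin (Linked.nil _)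
      · intro w hw
        rw [hverts]
        simp at hw ⊢
        tauto
      · intro f hf
        rw [hedges]
        simpa using hf
  | series hconn h1 h2 ih1 ih2 =>
    rename_i G' H₁ H₂
    intro v hv
    rw [← hconn.vert_union] at hv
    have hjunction : ∀ w ∈ H₁.verts, w ∈ H₂.verts → w = H₁.t := by
      intro w hw1 hw2
      have : w ∈ H₁.verts ∩ H₂.verts := Finset.mem_inter.mpr ⟨hw1, hw2⟩
      rw [hconn.vert_inter] at this
      simpa using this
    rcases Finset.mem_union.mp hv with hv | hv
    · obtain ⟨vs, es, hp⟩ := ih1 v hv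
      exact ⟨vs, es, by rw [hconn.src]; exact hp.lift hconn.sub1⟩
    · obtain ⟨vs₁, es₁, hp₁, hm₁⟩ := sp_path h1
      obtain ⟨vs₂, es₂, hp₂⟩ := ih2 v hv
      have hm₂ := hp₂.vmem
      have hp₁' := hp₁.lift hconn.sub1
      have hp₂' := (hp₂.lift hconn.sub2)
      rw [← hconn.mid] at hp₂'
      have hcat := hp₁'.concat hp₂' (fun w hw hw' => hjunction w (hm₁ w hw) (hm₂ w hw'))
      exact ⟨_, _, by rw [hconn.src]; exact hcat⟩
  | parallel hconn h1 h2 ih1 ih2 =>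
    rename_i G' H₁ H₂
    intro v hv
    rw [← hconn.vert_union] at hv
    rcases Finset.mem_union.mp hv with hv | hv
    · obtain ⟨vs, es, hp⟩ := ih1 v hv
      exact ⟨vs, es, by rw [hconn.src]; exact hp.lift hconn.sub1⟩
    · obtain ⟨vs, es, hp⟩ := ih2 v hv
      exact ⟨vs, es, by rw [hconn.src, hconn.src_eq]; exact hp.lift hconn.sub2⟩

/-- In a series-parallel graph, every vertex is reachable from `t`. -/
lemma sp_path_from_t {G : TTGraph} (h : IsSP G) :
    ∀ v ∈ G.verts, ∃ vs es, G.toSignedGraph.GP G.t v vs es := by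
  induction h with
  | k2 hk2 =>
    rename_i G0
    intro v hv
    obtain ⟨hverts, e₀, hedges, hjoin⟩ := hk2
    rw [hverts] at hv
    simp at hv
    rcases hv with rfl | rfl
    · refine ⟨[G0.t, G0.s], [e₀], ⟨?_, rfl, rfl, by simp [Ne.symm G0.s_ne_t], ?_, ?_⟩⟩
      · exact Linked.cons hjoin.symm' (Linked.nil _)
      · intro w hw
        rw [hverts]
        simp at hw ⊢
        tauto
      · intro f hf
        rw [hedges]
        simpa using hf
    · exact ⟨[G0.t], [], GP.single (by rw [hverts]; simp)⟩
  | series hconn h1 h2 ih1 ih2 =>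
    rename_i G' H₁ H₂
    intro v hv
    rw [← hconn.vert_union] at hv
    have hjunction : ∀ w ∈ H₂.verts, w ∈ H₁.verts → w = H₁.t := by
      intro w hw1 hw2
      have : w ∈ H₁.verts ∩ H₂.verts := Finset.mem_inter.mpr ⟨hw2, hw1⟩
      rw [hconn.vert_inter] at this
      simpa using this
    rcases Finset.mem_union.mp hv with hv | hv
    · -- go from t₂ back to t₁ = s₂ along a path of H₂, then into H₁
      obtain ⟨vs₂, es₂, hp₂, hm₂⟩ := sp_path h2
      obtain ⟨vs₁, es₁, hp₁⟩ := ih1 v hv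
      have hm₁ := hp₁.vmem
      have hp₂' := (hp₂.reverse).lift hconn.sub2
      have hp₁' := hp₁.lift hconn.sub1
      rw [hconn.mid] at hp₁'
      have hcat := hp₂'.concat hp₁' ?hint
      case hint =>
        intro w hw hw'
        rw [← hconn.mid]
        exact hjunction w (hm₂ w (List.mem_reverse.mp hw)) (hm₁ w hw')
      exact ⟨_, _, by rw [hconn.tgt]; exact hcat⟩
    · obtain ⟨vs, es, hp⟩ := ih2 v hv
      exact ⟨vs, es, by rw [hconn.tgt]; exact hp.lift hconn.sub2⟩
  | parallel hconn h1 h2 ih1 ih2 =>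
    rename_i G' H₁ H₂
    intro v hv
    rw [← hconn.vert_union] at hv
    rcases Finset.mem_union.mp hv with hv | hv
    · obtain ⟨vs, es, hp⟩ := ih1 v hv
      exact ⟨vs, es, by rw [hconn.tgt]; exact hp.lift hconn.sub1⟩
    · obtain ⟨vs, es, hp⟩ := ih2 v hv
      exact ⟨vs, es, by rw [hconn.tgt, hconn.tgt_eq]; exact hp.lift hconn.sub2⟩

end Connectivity
section Dichotomy

open SignedGraph

lemma consistent_flip {G : SignedGraph} {κ : ℕ → Bool} (h : G.Consistent κ) :
    G.Consistent (fun v => !κ v) := by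
  intro e he
  have := h e he
  cases hu1 : κ (G.fst e) <;> cases hv1 : κ (G.snd e) <;> simp_all

lemma glue_consistent {G : SignedGraph} {A B : SignedGraph}
    (hsubA : A.IsSubgraph G) (hsubB : B.IsSubgraph G)
    (hedges : A.edges ∪ B.edges = G.edges) {κa κb : ℕ → Bool}
    (ha : A.Consistent κa) (hb : B.Consistent κb)
    (hagree : ∀ v ∈ A.verts, v ∈ B.verts → κa v = κb v) :
    G.Consistent (fun v => if v ∈ A.verts then κa v else κb v) := by
  intro e he
  rw [← hedges] at he
  rcases Finset.mem_union.mp he with he | he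
  · obtain ⟨hf, hs, hg⟩ := hsubA.2.2 e he
    have h1 : A.fst e ∈ A.verts := A.fst_mem e he
    have h2 : A.snd e ∈ A.verts := A.snd_mem e he
    rw [← hg, ← hf, ← hs]
    simp only [h1, h2, if_pos]
    exact ha e he
  · obtain ⟨hf, hs, hg⟩ := hsubB.2.2 e he
    have h1 : B.fst e ∈ B.verts := B.fst_mem e he
    have h2 : B.snd e ∈ B.verts := B.snd_mem e he
    have key : ∀ v ∈ B.verts, (if v ∈ A.verts then κa v else κb v) = κb v := by
      intro v hv
      by_cases hva : v ∈ A.verts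
      · simp only [hva, if_pos]
        exact hagree v hva hv
      · simp [hva]
    rw [← hg, ← hf, ← hs]
    simp only [key _ h1, key _ h2]
    exact hb e he

/-- Adjust a colouring by flipping so that it matches a given value at one vertex. -/
lemma adjust_consistent {G : SignedGraph} {κ : ℕ → Bool} (h : G.Consistent κ)
    (x : ℕ) (b : Bool) : ∃ κ', G.Consistent κ' ∧ κ' x = b ∧
      (∀ u v, (κ' u = κ' v) ↔ (κ u = κ v)) := by
  by_cases hx : κ x = b
  · exact ⟨κ, h, hx, fun u v => Iff.rfl⟩
  · refine ⟨fun v => !κ v, consistent_flip h, ?_, ?_⟩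
    · cases hb : κ x <;> cases hbb : b <;> simp_all
    · intro u v
      cases hu : κ u <;> cases hv : κ v <;> simp [hu, hv]

lemma series_consistent {G H₁ H₂ : TTGraph} (hconn : IsSeriesConn2 G H₁ H₂)
    (h1 : ∃ κ, H₁.toSignedGraph.Consistent κ) (h2 : ∃ κ, H₂.toSignedGraph.Consistent κ) :
    ∃ κ, G.toSignedGraph.Consistent κ := by
  obtain ⟨κ₁, hκ₁⟩ := h1
  obtain ⟨κ₂0, hκ₂0⟩ := h2
  obtain ⟨κ₂, hκ₂, hmatch, -⟩ := adjust_consistent hκ₂0 H₁.t (κ₁ H₁.t)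
  refine ⟨fun v => if v ∈ H₁.verts then κ₁ v else κ₂ v,
    glue_consistent hconn.sub1 hconn.sub2 hconn.edge_union hκ₁ hκ₂ ?_⟩
  intro v hv1 hv2
  have : v ∈ H₁.verts ∩ H₂.verts := Finset.mem_inter.mpr ⟨hv1, hv2⟩
  rw [hconn.vert_inter] at this
  simp at this
  rw [this, hmatch]

lemma parallel_swap {G H₁ H₂ : TTGraph} (h : IsParallelConn2 G H₁ H₂) :
    IsParallelConn2 G H₂ H₁ := by
  refine ⟨h.sub2, h.sub1, ?_, ?_, h.src_eq.symm, h.tgt_eq.symm, ?_, h.edge_disj.symm, ?_, ?_⟩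
  · rw [Finset.union_comm]; exact h.vert_union
  · rw [Finset.inter_comm, h.vert_inter, h.src_eq, h.tgt_eq]
  · rw [Finset.union_comm]; exact h.edge_union
  · rw [h.src, h.src_eq]
  · rw [h.tgt, h.tgt_eq]

/-- Combine an `s`–`t` path of each side of a parallel connection, with odd total
negativity, into an unbalanced cycle of the parallel connection. -/
lemma parallel_cycle_of_paths {G H₁ H₂ : TTGraph} (hconn : IsParallelConn2 G H₁ H₂)
    {vs₁ es₁ vs₂ es₂ : List ℕ}
    (p₁ : H₁.toSignedGraph.GP H₁.s H₁.t vs₁ es₁)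
    (p₂ : H₂.toSignedGraph.GP H₂.s H₂.t vs₂ es₂)
    (hodd : Odd (H₁.toSignedGraph.negCount es₁ + H₂.toSignedGraph.negCount es₂)) :
    ∃ vs, G.toSignedGraph.GC vs (es₁ ++ es₂.reverse) ∧
      Odd (G.toSignedGraph.negCount (es₁ ++ es₂.reverse)) ∧
      (∀ v ∈ vs, v ∈ vs₁ ∨ v ∈ vs₂) := by
  have hm₁ := p₁.vmem
  have hm₂ := p₂.vmem
  have p₁' := p₁.lift hconn.sub1
  have p₂' := p₂.lift hconn.sub2
  rw [← hconn.src_eq, ← hconn.tgt_eq] at p₂'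
  have hint : ∀ v ∈ vs₁, v ∈ vs₂ → v = H₁.s ∨ v = H₁.t := by
    intro v hv1 hv2
    have : v ∈ H₁.verts ∩ H₂.verts := Finset.mem_inter.mpr ⟨hm₁ v hv1, hm₂ v hv2⟩
    rw [hconn.vert_inter] at this
    simpa using this
  have hdisj : ∀ f ∈ es₁, f ∉ es₂ := by
    intro f hf1 hf2
    exact Finset.disjoint_left.mp hconn.edge_disj (p₁.emem f hf1) (p₂.emem f hf2)
  obtain ⟨gc, hmem⟩ := GC.ofTwoPaths p₁' p₂' H₁.s_ne_t hint hdisj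
  refine ⟨_, gc, ?_, hmem⟩
  have hc1 : G.toSignedGraph.negCount es₁ = H₁.toSignedGraph.negCount es₁ :=
    negCount_congr hconn.sub1 p₁.emem
  have hc2 : G.toSignedGraph.negCount es₂ = H₂.toSignedGraph.negCount es₂ :=
    negCount_congr hconn.sub2 p₂.emem
  rw [negCount_append, negCount_reverse, hc1, hc2]
  exact hodd

/-- Dichotomy: a series-parallel graph is balanced (has a consistent colouring)
or unbalanced. -/
lemma sp_dichotomy {G : TTGraph} (h : IsSP G) :
    (∃ κ, G.toSignedGraph.Consistent κ) ∨ G.toSignedGraph.IsUnbalanced := by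
  induction h with
  | k2 hk2 =>
    rename_i G0
    left
    obtain ⟨hverts, e₀, hedges, hjoin⟩ := hk2
    refine ⟨fun v => if v = G0.t then G0.sign e₀ else true, ?_⟩
    intro e he
    have he0 : e = e₀ := by rw [hedges] at he; simpa using he
    subst he0
    have hst := G0.s_ne_t
    rcases hjoin with ⟨h1, h2⟩ | ⟨h1, h2⟩
    · rw [h1, h2]
      simp [hst, if_neg hst]
    · rw [h1, h2]
      simp [hst, if_neg hst]
  | series hconn h1 h2 ih1 ih2 =>
    rename_i G' H₁ H₂
    rcases ih1 with ih1 | ih1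
    · rcases ih2 with ih2 | ih2
      · exact Or.inl (series_consistent hconn ih1 ih2)
      · exact Or.inr (unbalanced_lift hconn.sub2 ih2)
    · exact Or.inr (unbalanced_lift hconn.sub1 ih1)
  | parallel hconn h1 h2 ih1 ih2 =>
    rename_i G' H₁ H₂
    rcases ih1 with ih1 | ih1
    swap
    · exact Or.inr (unbalanced_lift hconn.sub1 ih1)
    rcases ih2 with ih2 | ih2
    swap
    · exact Or.inr (unbalanced_lift hconn.sub2 ih2)
    obtain ⟨κ₁, hκ₁⟩ := ih1
    obtain ⟨κ₂0, hκ₂0⟩ := ih2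
    obtain ⟨κ₂, hκ₂, hmatchs, hiff⟩ := adjust_consistent hκ₂0 H₂.s (κ₁ H₁.s)
    by_cases hmatcht : κ₁ H₁.t = κ₂ H₂.t
    · left
      refine ⟨fun v => if v ∈ H₁.verts then κ₁ v else κ₂ v,
        glue_consistent hconn.sub1 hconn.sub2 hconn.edge_union hκ₁ hκ₂ ?_⟩
      intro v hv1 hv2
      have : v ∈ H₁.verts ∩ H₂.verts := Finset.mem_inter.mpr ⟨hv1, hv2⟩
      rw [hconn.vert_inter] at this
      simp at this
      rcases this with rfl | rfl
      · conv_rhs => rw [hconn.src_eq]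
        rw [hmatchs]
      · conv_rhs => rw [hconn.tgt_eq]
        exact hmatcht
    · right
      obtain ⟨vs₁, es₁, p₁, _⟩ := sp_path h1
      obtain ⟨vs₂, es₂, p₂, _⟩ := sp_path h2
      have hpar₁ : Even (H₁.toSignedGraph.negCount es₁) ↔ (κ₁ H₁.s = κ₁ H₁.t) :=
        parity_gp hκ₁ p₁
      have hpar₂ : Even (H₂.toSignedGraph.negCount es₂) ↔ (κ₂ H₂.s = κ₂ H₂.t) :=
        parity_gp hκ₂ p₂
      have hodd : Odd (H₁.toSignedGraph.negCount es₁ + H₂.toSignedGraph.negCount es₂) := by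
        rw [Nat.odd_add, ← Nat.not_even_iff_odd, hpar₁, hpar₂, hmatchs]
        cases hb1 : κ₁ H₁.s <;> cases hb2 : κ₁ H₁.t <;> cases hb3 : κ₂ H₂.t <;>
          simp_all
      obtain ⟨vs, gc, hoddc, _⟩ := parallel_cycle_of_paths hconn p₁ p₂ hodd
      exact ⟨_, _, gc.toIsCycle, hoddc⟩

end Dichotomy
section ParityLemmas

open SignedGraph

/-- An unbalanced series-parallel graph has `s`–`t` paths of both parities. -/
lemma sp_both_parity {G : TTGraph} (h : IsSP G) :
    G.toSignedGraph.IsUnbalanced →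
    ∃ vs es vs' es', G.toSignedGraph.GP G.s G.t vs es ∧
      G.toSignedGraph.GP G.s G.t vs' es' ∧
      Odd (G.toSignedGraph.negCount es + G.toSignedGraph.negCount es') := by
  induction h with
  | k2 hk2 =>
    intro hunb
    exact absurd hunb (k2_not_unbalanced hk2)
  | series hconn h1 h2 ih1 ih2 =>
    rename_i G' H₁ H₂
    intro hunb
    have hjunction : ∀ w ∈ H₁.verts, w ∈ H₂.verts → w = H₁.t := by
      intro w hw1 hw2
      have : w ∈ H₁.verts ∩ H₂.verts := Finset.mem_inter.mpr ⟨hw1, hw2⟩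
      rw [hconn.vert_inter] at this
      simpa using this
    rcases sp_dichotomy h1 with hc1 | hu1
    · rcases sp_dichotomy h2 with hc2 | hu2
      · exact absurd hunb
          (consistent_no_unbalanced (series_consistent hconn hc1 hc2))
      · obtain ⟨vs₁, es₁, p, hm₁⟩ := sp_path h1
        obtain ⟨vsq, esq, vsq', esq', q, q', hodd⟩ := ih2 hu2
        have hmq := q.vmem
        have hmq' := q'.vmem
        have p' := p.lift hconn.sub1
        have ql := q.lift hconn.sub2
        have ql' := q'.lift hconn.sub2
        rw [← hconn.mid] at ql ql'
        have hcat := p'.concat ql (fun w hw hw' => hjunction w (hm₁ w hw) (hmq w hw'))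
        have hcat' := p'.concat ql' (fun w hw hw' => hjunction w (hm₁ w hw) (hmq' w hw'))
        refine ⟨_, _, _, _, by rw [hconn.src, hconn.tgt]; exact hcat,
          by rw [hconn.src, hconn.tgt]; exact hcat', ?_⟩
        rw [negCount_append, negCount_append,
          negCount_congr hconn.sub1 p.emem, negCount_congr hconn.sub2 q.emem,
          negCount_congr hconn.sub2 q'.emem]
        rw [Nat.odd_iff] at hodd ⊢
        omega
    · obtain ⟨vsp, esp, vsp', esp', p, p', hodd⟩ := ih1 hu1
      obtain ⟨vs₂, es₂, q, hm₂⟩ := sp_path h2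
      have hmp := p.vmem
      have hmp' := p'.vmem
      have pl := p.lift hconn.sub1
      have pl' := p'.lift hconn.sub1
      have ql := q.lift hconn.sub2
      rw [← hconn.mid] at ql
      have hcat := pl.concat ql (fun w hw hw' => hjunction w (hmp w hw) (hm₂ w hw'))
      have hcat' := pl'.concat ql (fun w hw hw' => hjunction w (hmp' w hw) (hm₂ w hw'))
      refine ⟨_, _, _, _, by rw [hconn.src, hconn.tgt]; exact hcat,
        by rw [hconn.src, hconn.tgt]; exact hcat', ?_⟩
      rw [negCount_append, negCount_append,
        negCount_congr hconn.sub1 p.emem, negCount_congr hconn.sub1 p'.emem,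
        negCount_congr hconn.sub2 q.emem]
      rw [Nat.odd_iff] at hodd ⊢
      omega
  | parallel hconn h1 h2 ih1 ih2 =>
    rename_i G' H₁ H₂
    intro hunb
    rcases sp_dichotomy h1 with hc1 | hu1
    · rcases sp_dichotomy h2 with hc2 | hu2
      · -- both sides balanced: the colourings must disagree at one terminal
        obtain ⟨κ₁, hκ₁⟩ := hc1
        obtain ⟨κ₂0, hκ₂0⟩ := hc2
        obtain ⟨κ₂, hκ₂, hmatchs, hiff⟩ := adjust_consistent hκ₂0 H₂.s (κ₁ H₁.s)
        by_cases hmatcht : κ₁ H₁.t = κ₂ H₂.t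
        · exfalso
          apply consistent_no_unbalanced (G := G'.toSignedGraph) ?_ hunb
          refine ⟨fun v => if v ∈ H₁.verts then κ₁ v else κ₂ v,
            glue_consistent hconn.sub1 hconn.sub2 hconn.edge_union hκ₁ hκ₂ ?_⟩
          intro v hv1 hv2
          have : v ∈ H₁.verts ∩ H₂.verts := Finset.mem_inter.mpr ⟨hv1, hv2⟩
          rw [hconn.vert_inter] at this
          simp at this
          rcases this with rfl | rfl
          · conv_rhs => rw [hconn.src_eq]
            rw [hmatchs]
          · conv_rhs => rw [hconn.tgt_eq]
            exact hmatcht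
        · obtain ⟨vs₁, es₁, p₁, _⟩ := sp_path h1
          obtain ⟨vs₂, es₂, p₂, _⟩ := sp_path h2
          have hpar₁ : Even (H₁.toSignedGraph.negCount es₁) ↔ (κ₁ H₁.s = κ₁ H₁.t) :=
            parity_gp hκ₁ p₁
          have hpar₂ : Even (H₂.toSignedGraph.negCount es₂) ↔ (κ₂ H₂.s = κ₂ H₂.t) :=
            parity_gp hκ₂ p₂
          have hodd : Odd (H₁.toSignedGraph.negCount es₁ +
              H₂.toSignedGraph.negCount es₂) := by
            rw [Nat.odd_add, ← Nat.not_even_iff_odd, hpar₁, hpar₂, hmatchs]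
            cases hb1 : κ₁ H₁.s <;> cases hb2 : κ₁ H₁.t <;> cases hb3 : κ₂ H₂.t <;>
              simp_all
          have p₁' := p₁.lift hconn.sub1
          have p₂' := p₂.lift hconn.sub2
          rw [← hconn.src_eq, ← hconn.tgt_eq] at p₂'
          refine ⟨_, _, _, _, by rw [hconn.src, hconn.tgt]; exact p₁',
            by rw [hconn.src, hconn.tgt]; exact p₂', ?_⟩
          rw [negCount_congr hconn.sub1 p₁.emem, negCount_congr hconn.sub2 p₂.emem]
          exact hodd
      · obtain ⟨vs, es, vs', es', q, q', hodd⟩ := ih2 hu2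
        have ql := q.lift hconn.sub2
        have ql' := q'.lift hconn.sub2
        rw [← hconn.src_eq, ← hconn.tgt_eq] at ql ql'
        refine ⟨_, _, _, _, by rw [hconn.src, hconn.tgt]; exact ql,
          by rw [hconn.src, hconn.tgt]; exact ql', ?_⟩
        rw [negCount_congr hconn.sub2 q.emem, negCount_congr hconn.sub2 q'.emem]
        exact hodd
    · obtain ⟨vs, es, vs', es', p, p', hodd⟩ := ih1 hu1
      have pl := p.lift hconn.sub1
      have pl' := p'.lift hconn.sub1
      refine ⟨_, _, _, _, by rw [hconn.src, hconn.tgt]; exact pl,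
        by rw [hconn.src, hconn.tgt]; exact pl', ?_⟩
      rw [negCount_congr hconn.sub1 p.emem, negCount_congr hconn.sub1 p'.emem]
      exact hodd

/-- Key step for parallel connections: each edge of one side of an unbalanced
parallel connection lies in an unbalanced cycle. -/
lemma parallel_edge_case {G H₁ H₂ : TTGraph} (hconn : IsParallelConn2 G H₁ H₂)
    (h1 : IsSP H₁) (h2 : IsSP H₂)
    (ih1 : H₁.toSignedGraph.IsUnbalanced → ∀ e ∈ H₁.edges,
      (∃ vs es, H₁.toSignedGraph.GC vs es ∧ Odd (H₁.toSignedGraph.negCount es) ∧ e ∈ es) ∨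
      (∃ vs es vs' es', H₁.toSignedGraph.GP H₁.s H₁.t vs es ∧
        H₁.toSignedGraph.GP H₁.s H₁.t vs' es' ∧ e ∈ es ∧ e ∈ es' ∧
        Odd (H₁.toSignedGraph.negCount es + H₁.toSignedGraph.negCount es')))
    (hunb : G.toSignedGraph.IsUnbalanced) (e : ℕ) (he : e ∈ H₁.edges) :
    ∃ vs es, G.toSignedGraph.GC vs es ∧ Odd (G.toSignedGraph.negCount es) ∧ e ∈ es := by
  rcases sp_dichotomy h2 with hc2 | hu2
  · rcases sp_dichotomy h1 with hc1 | hu1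
    · -- both sides balanced: parity mismatch at a terminal
      obtain ⟨κ₁, hκ₁⟩ := hc1
      obtain ⟨κ₂0, hκ₂0⟩ := hc2
      obtain ⟨κ₂, hκ₂, hmatchs, hiff⟩ := adjust_consistent hκ₂0 H₂.s (κ₁ H₁.s)
      by_cases hmatcht : κ₁ H₁.t = κ₂ H₂.t
      · exfalso
        apply consistent_no_unbalanced (G := G.toSignedGraph) ?_ hunb
        refine ⟨fun v => if v ∈ H₁.verts then κ₁ v else κ₂ v,
          glue_consistent hconn.sub1 hconn.sub2 hconn.edge_union hκ₁ hκ₂ ?_⟩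
        intro v hv1 hv2
        have : v ∈ H₁.verts ∩ H₂.verts := Finset.mem_inter.mpr ⟨hv1, hv2⟩
        rw [hconn.vert_inter] at this
        simp at this
        rcases this with rfl | rfl
        · conv_rhs => rw [hconn.src_eq]
          rw [hmatchs]
        · conv_rhs => rw [hconn.tgt_eq]
          exact hmatcht
      · obtain ⟨vs₁, es₁, p₁, _, _⟩ := sp_path_through h1 e he
        obtain ⟨vs₂, es₂, p₂, _⟩ := sp_path h2
        have hpar₁ : Even (H₁.toSignedGraph.negCount es₁) ↔ (κ₁ H₁.s = κ₁ H₁.t) :=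
          parity_gp hκ₁ p₁
        have hpar₂ : Even (H₂.toSignedGraph.negCount es₂) ↔ (κ₂ H₂.s = κ₂ H₂.t) :=
          parity_gp hκ₂ p₂
        have hodd : Odd (H₁.toSignedGraph.negCount es₁ +
            H₂.toSignedGraph.negCount es₂) := by
          rw [Nat.odd_add, ← Nat.not_even_iff_odd, hpar₁, hpar₂, hmatchs]
          cases hb1 : κ₁ H₁.s <;> cases hb2 : κ₁ H₁.t <;> cases hb3 : κ₂ H₂.t <;>
            simp_all
        obtain ⟨vs, gc, hoddc, _⟩ := parallel_cycle_of_paths hconn p₁ p₂ hodd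
        exact ⟨vs, _, gc, hoddc, by simp [‹e ∈ es₁›]⟩
    · rcases ih1 hu1 e he with ⟨vs, es, gc, hodd, hein⟩ | ⟨vsp, esp, vsp', esp', p, p', hep, hep', hodd⟩
      · refine ⟨vs, es, gc.lift hconn.sub1, ?_, hein⟩
        rwa [negCount_congr hconn.sub1 gc.emem]
      · obtain ⟨vs₂, es₂, q, _⟩ := sp_path h2
        rcases Nat.even_or_odd (H₁.toSignedGraph.negCount esp +
            H₂.toSignedGraph.negCount es₂) with heven | hoddpq
        · have hodd' : Odd (H₁.toSignedGraph.negCount esp' +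
              H₂.toSignedGraph.negCount es₂) := by
            rw [Nat.odd_iff] at hodd ⊢
            rw [Nat.even_iff] at heven
            omega
          obtain ⟨vs, gc, hoddc, _⟩ := parallel_cycle_of_paths hconn p' q hodd'
          exact ⟨vs, _, gc, hoddc, by simp [hep']⟩
        · obtain ⟨vs, gc, hoddc, _⟩ := parallel_cycle_of_paths hconn p q hoddpq
          exact ⟨vs, _, gc, hoddc, by simp [hep]⟩
  · -- H₂ is unbalanced: it has paths of both parities
    obtain ⟨vs₁, es₁, p₁, _, _⟩ := sp_path_through h1 e he
    obtain ⟨vsq, esq, vsq', esq', q, q', hodd⟩ := sp_both_parity h2 hu2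
    rcases Nat.even_or_odd (H₁.toSignedGraph.negCount es₁ +
        H₂.toSignedGraph.negCount esq) with heven | hoddpq
    · have hodd' : Odd (H₁.toSignedGraph.negCount es₁ +
          H₂.toSignedGraph.negCount esq') := by
        rw [Nat.odd_iff] at hodd ⊢
        rw [Nat.even_iff] at heven
        omega
      obtain ⟨vs, gc, hoddc, _⟩ := parallel_cycle_of_paths hconn p₁ q' hodd'
      exact ⟨vs, _, gc, hoddc, by simp [‹e ∈ es₁›]⟩
    · obtain ⟨vs, gc, hoddc, _⟩ := parallel_cycle_of_paths hconn p₁ q hoddpq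
      exact ⟨vs, _, gc, hoddc, by simp [‹e ∈ es₁›]⟩

end ParityLemmas
section LemmaR

open SignedGraph

/-- In an unbalanced series-parallel graph, every edge lies in an unbalanced
cycle, or lies on two `s`–`t` paths of opposite parity. -/
lemma sp_edge_cycle_or_both {G : TTGraph} (h : IsSP G) :
    G.toSignedGraph.IsUnbalanced → ∀ e ∈ G.edges,
      (∃ vs es, G.toSignedGraph.GC vs es ∧ Odd (G.toSignedGraph.negCount es) ∧ e ∈ es) ∨
      (∃ vs es vs' es', G.toSignedGraph.GP G.s G.t vs es ∧
        G.toSignedGraph.GP G.s G.t vs' es' ∧ e ∈ es ∧ e ∈ es' ∧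
        Odd (G.toSignedGraph.negCount es + G.toSignedGraph.negCount es')) := by
  induction h with
  | k2 hk2 =>
    intro hunb
    exact absurd hunb (k2_not_unbalanced hk2)
  | series hconn h1 h2 ih1 ih2 =>
    rename_i G' H₁ H₂
    intro hunb e he
    rw [← hconn.edge_union] at he
    have hjunction : ∀ w ∈ H₁.verts, w ∈ H₂.verts → w = H₁.t := by
      intro w hw1 hw2
      have : w ∈ H₁.verts ∩ H₂.verts := Finset.mem_inter.mpr ⟨hw1, hw2⟩
      rw [hconn.vert_inter] at this
      simpa using this
    rcases Finset.mem_union.mp he with he | he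
    · rcases sp_dichotomy h1 with hc1 | hu1
      · rcases sp_dichotomy h2 with hc2 | hu2
        · exact absurd hunb
            (consistent_no_unbalanced (series_consistent hconn hc1 hc2))
        · right
          obtain ⟨vs₁, es₁, p, hep, _⟩ := sp_path_through h1 e he
          obtain ⟨vsq, esq, vsq', esq', q, q', hodd⟩ := sp_both_parity h2 hu2
          have hm₁ := p.vmem
          have hmq := q.vmem
          have hmq' := q'.vmem
          have pl := p.lift hconn.sub1
          have ql := q.lift hconn.sub2
          have ql' := q'.lift hconn.sub2
          rw [← hconn.mid] at ql ql'
          have hcat := pl.concat ql (fun w hw hw' => hjunction w (hm₁ w hw) (hmq w hw'))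
          have hcat' := pl.concat ql' (fun w hw hw' => hjunction w (hm₁ w hw) (hmq' w hw'))
          refine ⟨_, _, _, _, by rw [hconn.src, hconn.tgt]; exact hcat,
            by rw [hconn.src, hconn.tgt]; exact hcat', by simp [hep], by simp [hep], ?_⟩
          rw [negCount_append, negCount_append,
            negCount_congr hconn.sub1 p.emem, negCount_congr hconn.sub2 q.emem,
            negCount_congr hconn.sub2 q'.emem]
          rw [Nat.odd_iff] at hodd ⊢
          omega
      · rcases ih1 hu1 e he with ⟨vs, es, gc, hodd, hein⟩ |
          ⟨vsp, esp, vsp', esp', p, p', hep, hep', hodd⟩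
        · left
          refine ⟨vs, es, gc.lift hconn.sub1, ?_, hein⟩
          rwa [negCount_congr hconn.sub1 gc.emem]
        · right
          obtain ⟨vs₂, es₂, q, hm₂⟩ := sp_path h2
          have hmp := p.vmem
          have hmp' := p'.vmem
          have pl := p.lift hconn.sub1
          have pl' := p'.lift hconn.sub1
          have ql := q.lift hconn.sub2
          rw [← hconn.mid] at ql
          have hcat := pl.concat ql (fun w hw hw' => hjunction w (hmp w hw) (hm₂ w hw'))
          have hcat' := pl'.concat ql (fun w hw hw' => hjunction w (hmp' w hw) (hm₂ w hw'))
          refine ⟨_, _, _, _, by rw [hconn.src, hconn.tgt]; exact hcat,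
            by rw [hconn.src, hconn.tgt]; exact hcat', by simp [hep], by simp [hep'], ?_⟩
          rw [negCount_append, negCount_append,
            negCount_congr hconn.sub1 p.emem, negCount_congr hconn.sub1 p'.emem,
            negCount_congr hconn.sub2 q.emem]
          rw [Nat.odd_iff] at hodd ⊢
          omega
    · rcases sp_dichotomy h2 with hc2 | hu2
      · rcases sp_dichotomy h1 with hc1 | hu1
        · exact absurd hunb
            (consistent_no_unbalanced (series_consistent hconn hc1 hc2))
        · right
          obtain ⟨vs₂, es₂, q, heq, _⟩ := sp_path_through h2 e he
          obtain ⟨vsp, esp, vsp', esp', p, p', hodd⟩ := sp_both_parity h1 hu1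
          have hm₂ := q.vmem
          have hmp := p.vmem
          have hmp' := p'.vmem
          have ql := q.lift hconn.sub2
          have pl := p.lift hconn.sub1
          have pl' := p'.lift hconn.sub1
          rw [← hconn.mid] at ql
          have hcat := pl.concat ql (fun w hw hw' => hjunction w (hmp w hw) (hm₂ w hw'))
          have hcat' := pl'.concat ql (fun w hw hw' => hjunction w (hmp' w hw) (hm₂ w hw'))
          refine ⟨_, _, _, _, by rw [hconn.src, hconn.tgt]; exact hcat,
            by rw [hconn.src, hconn.tgt]; exact hcat', by simp [heq], by simp [heq], ?_⟩
          rw [negCount_append, negCount_append,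
            negCount_congr hconn.sub1 p.emem, negCount_congr hconn.sub1 p'.emem,
            negCount_congr hconn.sub2 q.emem]
          rw [Nat.odd_iff] at hodd ⊢
          omega
      · rcases ih2 hu2 e he with ⟨vs, es, gc, hodd, hein⟩ |
          ⟨vsq, esq, vsq', esq', q, q', heq, heq', hodd⟩
        · left
          refine ⟨vs, es, gc.lift hconn.sub2, ?_, hein⟩
          rwa [negCount_congr hconn.sub2 gc.emem]
        · right
          obtain ⟨vs₁, es₁, p, hm₁⟩ := sp_path h1
          have hmq := q.vmem
          have hmq' := q'.vmem
          have pl := p.lift hconn.sub1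
          have ql := q.lift hconn.sub2
          have ql' := q'.lift hconn.sub2
          rw [← hconn.mid] at ql ql'
          have hcat := pl.concat ql (fun w hw hw' => hjunction w (hm₁ w hw) (hmq w hw'))
          have hcat' := pl.concat ql' (fun w hw hw' => hjunction w (hm₁ w hw) (hmq' w hw'))
          refine ⟨_, _, _, _, by rw [hconn.src, hconn.tgt]; exact hcat,
            by rw [hconn.src, hconn.tgt]; exact hcat', by simp [heq], by simp [heq'], ?_⟩
          rw [negCount_append, negCount_append,
            negCount_congr hconn.sub1 p.emem, negCount_congr hconn.sub2 q.emem,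
            negCount_congr hconn.sub2 q'.emem]
          rw [Nat.odd_iff] at hodd ⊢
          omega
  | parallel hconn h1 h2 ih1 ih2 =>
    rename_i G' H₁ H₂
    intro hunb e he
    rw [← hconn.edge_union] at he
    rcases Finset.mem_union.mp he with he | he
    · exact Or.inl (parallel_edge_case hconn h1 h2 ih1 hunb e he)
    · exact Or.inl (parallel_edge_case (parallel_swap hconn) h2 h1 ih2 hunb e he)

/-- In an unbalanced parallel connection of series-parallel graphs, every edge
lies in an unbalanced cycle. -/
lemma parallel_unbalanced_edge_cycle {G H₁ H₂ : TTGraph}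
    (hconn : IsParallelConn2 G H₁ H₂) (h1 : IsSP H₁) (h2 : IsSP H₂)
    (hunb : G.toSignedGraph.IsUnbalanced) :
    ∀ e ∈ G.edges, ∃ vs es, G.toSignedGraph.GC vs es ∧
      Odd (G.toSignedGraph.negCount es) ∧ e ∈ es := by
  intro e he
  rw [← hconn.edge_union] at he
  rcases Finset.mem_union.mp he with he | he
  · exact parallel_edge_case hconn h1 h2 (sp_edge_cycle_or_both h1) hunb e he
  · exact parallel_edge_case (parallel_swap hconn) h2 h1 (sp_edge_cycle_or_both h2)
      hunb e he

end LemmaR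
namespace SignedGraph

lemma getD_mem_of_lt {l : List ℕ} {i : ℕ} (h : i < l.length) : l.getD i 0 ∈ l := by
  rw [List.getD_eq_getElem?_getD, List.getElem?_eq_getElem h]
  simp [List.getElem_mem]

lemma getD_last_of_getLast? {l : List ℕ} {b : ℕ} (h : l.getLast? = some b) :
    l.getD (l.length - 1) 0 = b := by
  induction l with
  | nil => simp at h
  | cons u t ih =>
    cases t with
    | nil => simpa using h
    | cons v t' =>
      have h' : (v :: t').getLast? = some b := by
        rw [← h]; simp [List.getLast?_cons_cons]
      have := ih h'
      simpa using this

lemma nodup_getD_inj {l : List ℕ} (hnd : l.Nodup) {i j : ℕ}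
    (hi : i < l.length) (hj : j < l.length) (h : l.getD i 0 = l.getD j 0) : i = j := by
  rw [List.getD_eq_getElem?_getD, List.getElem?_eq_getElem hi] at h
  rw [List.getD_eq_getElem?_getD, List.getElem?_eq_getElem hj] at h
  simp at h
  exact (hnd.getElem_inj_iff).mp h

namespace GP

lemma getD_zero {G : SignedGraph} {a b : ℕ} {vs es : List ℕ} (h : G.GP a b vs es) :
    vs.getD 0 0 = a := by
  have hha := h.ha
  cases vs with
  | nil => simp at hha
  | cons u t => simpa using hha

lemma getD_last {G : SignedGraph} {a b : ℕ} {vs es : List ℕ} (h : G.GP a b vs es) :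
    vs.getD (vs.length - 1) 0 = b := getD_last_of_getLast? h.hb

lemma toIsPath {G : SignedGraph} {a b : ℕ} {vs es : List ℕ} (h : G.GP a b vs es) :
    G.IsPath vs es :=
  ⟨h.ne_nil, h.linked.length_eq, h.vnodup, h.linked.enodup h.vnodup, h.vmem, h.emem,
    h.linked.getD_link⟩

end GP

lemma unb_to_gc {G : SignedGraph} (h : G.IsUnbalanced) :
    ∃ vs es, G.GC vs es ∧ Odd (G.negCount es) := by
  obtain ⟨vs, es, hcyc, hodd⟩ := h
  exact ⟨vs, es, GC.ofIsCycle hcyc, hodd⟩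

end SignedGraph

section HitPaths

open SignedGraph

/-- From a cycle, an exit path to `t` meeting the cycle only in its
first vertex. -/
lemma cycle_exit_to_t {G : TTGraph} (h : IsSP G) {vsC esC : List ℕ}
    (hC : G.toSignedGraph.GC vsC esC) :
    ∃ x vs es, G.toSignedGraph.GP x G.t vs es ∧ x ∈ vsC ∧
      (∀ v ∈ vs, v ∈ vsC → v = x) := by
  have hv₀ : vsC.headI ∈ G.verts := hC.vmem _ hC.headI_mem
  obtain ⟨vs, es, p⟩ := sp_path_from_t h vsC.headI hv₀
  obtain ⟨x, vs', es', hgp, hpx, huniq, _, _⟩ := p.firstHit (fun v => decide (v ∈ vsC))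
    ⟨vsC.headI, p.b_mem, by simp [hC.headI_mem]⟩
  refine ⟨x, vs'.reverse, es'.reverse, by simpa using hgp.reverse, by simpa using hpx, ?_⟩
  intro v hv hvC
  exact huniq v (List.mem_reverse.mp hv) (by simpa using hvC)

/-- From `s`, an entry path into a cycle meeting the cycle only in its
last vertex. -/
lemma cycle_entry_from_s {G : TTGraph} (h : IsSP G) {vsC esC : List ℕ}
    (hC : G.toSignedGraph.GC vsC esC) :
    ∃ x vs es, G.toSignedGraph.GP G.s x vs es ∧ x ∈ vsC ∧
      (∀ v ∈ vs, v ∈ vsC → v = x) := by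
  have hv₀ : vsC.headI ∈ G.verts := hC.vmem _ hC.headI_mem
  obtain ⟨vs, es, p⟩ := sp_path_from_s h vsC.headI hv₀
  obtain ⟨x, vs', es', hgp, hpx, huniq, _, _⟩ := p.firstHit (fun v => decide (v ∈ vsC))
    ⟨vsC.headI, p.b_mem, by simp [hC.headI_mem]⟩
  refine ⟨x, vs', es', hgp, by simpa using hpx, ?_⟩
  intro v hv hvC
  exact huniq v hv (by simpa using hvC)

/-- An unbalanced series-parallel graph has an unbalanced cycle together with
an entry path from `s`. -/
lemma unbalanced_cycle_entry {G : TTGraph} (h : IsSP G)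
    (hunb : G.toSignedGraph.IsUnbalanced) :
    ∃ vsC esC x vs es, G.toSignedGraph.GC vsC esC ∧
      Odd (G.toSignedGraph.negCount esC) ∧
      G.toSignedGraph.GP G.s x vs es ∧ x ∈ vsC ∧ (∀ v ∈ vs, v ∈ vsC → v = x) := by
  obtain ⟨vsC, esC, hC, hodd⟩ := unb_to_gc hunb
  obtain ⟨x, vs, es, hgp, hx, huniq⟩ := cycle_entry_from_s h hC
  exact ⟨vsC, esC, x, vs, es, hC, hodd, hgp, hx, huniq⟩

end HitPaths

section Assembly

open SignedGraph

/-- Assemble a barbell in a series connection `G = S(G₁, X)` from an unbalanced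
cycle in `G₁` with an exit path to `G₁.t`, and an unbalanced cycle in `X` with
an entry path from `X.s`. -/
lemma assemble_barbell {G G₁ X : TTGraph} (hc : IsSeriesConn2 G G₁ X)
    {vs₁ es₁ vsC esC : List ℕ} {x₁ x₂ : ℕ} {vsR esR vsQ esQ : List ℕ}
    (hC₁ : G₁.toSignedGraph.GC vs₁ es₁) (hodd₁ : Odd (G₁.toSignedGraph.negCount es₁))
    (hC₂ : X.toSignedGraph.GC vsC esC) (hodd₂ : Odd (X.toSignedGraph.negCount esC))
    (hR : G₁.toSignedGraph.GP x₁ G₁.t vsR esR) (hx₁ : x₁ ∈ vs₁)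
    (huR : ∀ v ∈ vsR, v ∈ vs₁ → v = x₁)
    (hQ : X.toSignedGraph.GP X.s x₂ vsQ esQ) (hx₂ : x₂ ∈ vsC)
    (huQ : ∀ v ∈ vsQ, v ∈ vsC → v = x₂) :
    G.toSignedGraph.IsBarbell vs₁ es₁ vsC esC (vsR ++ vsQ.tail) (esR ++ esQ) := by
  have hinter : ∀ v ∈ G₁.verts, v ∈ X.verts → v = G₁.t := by
    intro v hv1 hv2
    have : v ∈ G₁.verts ∩ X.verts := Finset.mem_inter.mpr ⟨hv1, hv2⟩
    rw [hc.vert_inter] at this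
    simpa using this
  -- the junction vertex
  have hmid := hc.mid
  -- lifted paths
  have hR' := hR.lift hc.sub1
  have hQ' := hQ.lift hc.sub2
  rw [← hmid] at hQ'
  have hmR := hR.vmem
  have hmQ := hQ.vmem
  have hmC₁ := hC₁.vmem
  have hmC₂ := hC₂.vmem
  have hP := hR'.concat hQ' (fun v hv hv' => hinter v (hmR v hv) (hmQ v hv'))
  -- uniqueness of the meeting points on the connecting path
  have u1 : ∀ v ∈ vsR ++ vsQ.tail, v ∈ vs₁ → v = x₁ := by
    intro v hv hv1
    rcases List.mem_append.mp hv with hv | hv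
    · exact huR v hv hv1
    · have hvQ : v ∈ vsQ := List.mem_of_mem_tail hv
      have : v = G₁.t := hinter v (hmC₁ v hv1) (hmQ v hvQ)
      subst this
      exact huR _ hR.b_mem hv1
  have u2 : ∀ v ∈ vsR ++ vsQ.tail, v ∈ vsC → v = x₂ := by
    intro v hv hv2
    rcases List.mem_append.mp hv with hv | hv
    · have : v = G₁.t := hinter v (hmR v hv) (hmC₂ v hv2)
      subst this
      have hXs : X.s ∈ vsC := by rw [← hmid]; exact hv2
      have := huQ X.s hQ.a_mem hXs
      rw [hmid]
      exact this
    · exact huQ v (List.mem_of_mem_tail hv) hv2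
  refine ⟨⟨(hC₁.lift hc.sub1).toIsCycle, ?_⟩, ⟨(hC₂.lift hc.sub2).toIsCycle, ?_⟩, ?_,
    hP.toIsPath, ?_⟩
  · rwa [negCount_congr hc.sub1 hC₁.emem]
  · rwa [negCount_congr hc.sub2 hC₂.emem]
  · intro f hf1 hf2
    exact Finset.disjoint_left.mp hc.edge_disj (hC₁.emem f hf1) (hC₂.emem f hf2)
  · by_cases hdisj : ∀ v ∈ vs₁, v ∉ vsC
    · left
      have hlen : (vsR ++ vsQ.tail).length = (esR ++ esQ).length + 1 :=
        hP.linked.length_eq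
      have hlpos : 0 < (vsR ++ vsQ.tail).length := by
        rw [hlen]; omega
      refine ⟨hdisj, ?_, ?_, ?_⟩
      · rw [hP.getD_zero]; exact hx₁
      · rw [hP.getD_last]; exact hx₂
      · intro i h0 hip
        constructor
        · intro hmem
          have hv : (vsR ++ vsQ.tail).getD i 0 ∈ vsR ++ vsQ.tail :=
            getD_mem_of_lt (by omega)
          have := u1 _ hv hmem
          rw [← hP.getD_zero] at this
          have := nodup_getD_inj hP.vnodup (by omega) (by omega) this
          omega
        · intro hmem
          have hv : (vsR ++ vsQ.tail).getD i 0 ∈ vsR ++ vsQ.tail :=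
            getD_mem_of_lt (by omega)
          have := u2 _ hv hmem
          rw [← hP.getD_last] at this
          have := nodup_getD_inj hP.vnodup (by omega) (by omega) this
          omega
    · right
      push_neg at hdisj
      obtain ⟨w, hw1, hw2⟩ := hdisj
      have hwt : w = G₁.t := hinter w (hmC₁ w hw1) (hmC₂ w hw2)
      subst hwt
      have hx₁t : G₁.t = x₁ := huR _ hR.b_mem hw1
      have hx₂s : X.s = x₂ := by
        apply huQ X.s hQ.a_mem
        rw [← hmid]
        exact hw2
      have hRtriv : vsR = [G₁.t] ∧ esR = [] := by
        have := hR
        rw [← hx₁t] at this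
        exact this.eq_single
      have hQtriv : vsQ = [X.s] ∧ esQ = [] := by
        have := hQ
        rw [← hx₂s] at this
        exact this.eq_single
      refine ⟨G₁.t, hw1, hw2, ?_, ?_, ?_⟩
      · intro v hv1 hv2
        exact hinter v (hmC₁ v hv1) (hmC₂ v hv2)
      · rw [hRtriv.1, hQtriv.1]
        simp
      · rw [hRtriv.2, hQtriv.2]
        simp

end Assembly
section Chain

open SignedGraph

lemma subgraph_refl (G : SignedGraph) : G.IsSubgraph G :=
  ⟨Finset.Subset.refl _, Finset.Subset.refl _, fun _ _ => ⟨rfl, rfl, rfl⟩⟩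

/-- A chain of series connections, allowing a single graph. -/
inductive SChain : TTGraph → List TTGraph → Prop
  | single (H : TTGraph) : SChain H [H]
  | cons {G G' H : TTGraph} {l : List TTGraph} :
      IsSeriesConn2 G H G' → SChain G' l → SChain G (H :: l)

lemma SChain.of_list {G : TTGraph} {l : List TTGraph} (h : IsSeriesConnList G l) :
    SChain G l := by
  induction h with
  | two hc => exact .cons hc (.single _)
  | cons hc hl ih => exact .cons hc ih

lemma SChain.ne_nil {G : TTGraph} {l : List TTGraph} (h : SChain G l) : l ≠ [] := by
  cases h <;> simp

lemma SChain.sp {G : TTGraph} {l : List TTGraph} (h : SChain G l)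
    (hsp : ∀ H ∈ l, IsSP H) : IsSP G := by
  induction h with
  | single H => exact hsp H (by simp)
  | cons hc hl ih =>
    exact IsSP.series hc (hsp _ (by simp)) (ih fun H hH => hsp H (by simp [hH]))

lemma SChain.last_subgraph {G : TTGraph} {l : List TTGraph} (h : SChain G l) :
    ∀ {L : TTGraph}, l.getLast? = some L →
      L.toSignedGraph.IsSubgraph G.toSignedGraph := by
  induction h with
  | single H =>
    intro L hL
    simp at hL
    rw [← hL]
    exact subgraph_refl _
  | cons hc hl ih =>
    intro L hL
    have hne := hl.ne_nil
    rename_i G0 G' H l0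
    have : l0.getLast? = some L := by
      rw [← hL]
      cases l0 with
      | nil => exact absurd rfl hne
      | cons a t => simp [List.getLast?_cons_cons]
    exact (ih this).trans hc.sub2
end Chain

section Maximality

open SignedGraph

/-- Re-associate a series connection: if `G = S(H, X)` and `H = S(A, B)` then
there is `W = S(B, X)` with `G = S(A, W)`. -/
lemma series_split_head {G H X A B : TTGraph} (hc : IsSeriesConn2 G H X)
    (hab : IsSeriesConn2 H A B) :
    ∃ W, IsSeriesConn2 G A W ∧ IsSeriesConn2 W B X := by
  have hBG : B.toSignedGraph.IsSubgraph G.toSignedGraph := hab.sub2.trans hc.sub1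
  have hAG : A.toSignedGraph.IsSubgraph G.toSignedGraph := hab.sub1.trans hc.sub1
  have hXG := hc.sub2
  have hHX : ∀ v ∈ H.verts, v ∈ X.verts → v = H.t := by
    intro v h1 h2
    have : v ∈ H.verts ∩ X.verts := Finset.mem_inter.mpr ⟨h1, h2⟩
    rw [hc.vert_inter] at this
    simpa using this
  have hHtX : H.t ∈ X.verts := by
    have : H.t ∈ H.verts ∩ X.verts := by rw [hc.vert_inter]; simp
    exact (Finset.mem_inter.mp this).2
  have hABj : ∀ v ∈ A.verts, v ∈ B.verts → v = A.t := by
    intro v h1 h2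
    have : v ∈ A.verts ∩ B.verts := Finset.mem_inter.mpr ⟨h1, h2⟩
    rw [hab.vert_inter] at this
    simpa using this
  have hAX : ∀ v ∈ A.verts, v ∈ X.verts → False := by
    intro v h1 h2
    have hv : v = H.t := hHX v (hab.sub1.1 h1) h2
    subst hv
    have hBt : H.t = B.t := hab.tgt
    have : H.t = A.t := hABj _ h1 (by rw [hBt]; exact B.t_mem)
    have hAt : A.t = B.s := hab.mid
    exact B.s_ne_t (by rw [← hAt, ← this, hBt])
  have hBX : ∀ v ∈ B.verts, v ∈ X.verts → v = B.t := by
    intro v h1 h2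
    have := hHX v (hab.sub2.1 h1) h2
    rw [← hab.tgt]
    exact this
  have hs_ne : B.s ≠ X.t := by
    intro heq
    have h1 : B.s ∈ H.verts := hab.sub2.1 B.s_mem
    have h2 : B.s ∈ X.verts := by rw [heq]; exact X.t_mem
    have h3 : B.s = H.t := hHX _ h1 h2
    rw [hab.tgt] at h3
    exact B.s_ne_t h3
  have hfst : ∀ e ∈ B.edges ∪ X.edges, G.fst e ∈ B.verts ∪ X.verts := by
    intro e he
    rcases Finset.mem_union.mp he with he | he
    · rw [← (hBG.2.2 e he).1]
      exact Finset.mem_union_left _ (B.fst_mem e he)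
    · rw [← (hXG.2.2 e he).1]
      exact Finset.mem_union_right _ (X.fst_mem e he)
  have hsnd : ∀ e ∈ B.edges ∪ X.edges, G.snd e ∈ B.verts ∪ X.verts := by
    intro e he
    rcases Finset.mem_union.mp he with he | he
    · rw [← (hBG.2.2 e he).2.1]
      exact Finset.mem_union_left _ (B.snd_mem e he)
    · rw [← (hXG.2.2 e he).2.1]
      exact Finset.mem_union_right _ (X.snd_mem e he)
  refine ⟨{ verts := B.verts ∪ X.verts
            edges := B.edges ∪ X.edges
            fst := G.fst, snd := G.snd, sign := G.sign
            fst_mem := hfst, snd_mem := hsnd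
            s := B.s, t := X.t
            s_mem := Finset.mem_union_left _ B.s_mem
            t_mem := Finset.mem_union_right _ X.t_mem
            s_ne_t := hs_ne }, ?_, ?_⟩
  · -- IsSeriesConn2 G A W
    refine ⟨hAG, ⟨?_, ?_, fun e he => ⟨rfl, rfl, rfl⟩⟩, ?_, ?_, hab.mid, ?_, ?_, ?_, ?_⟩
    · -- W.verts ⊆ G.verts
      intro v hv
      rcases Finset.mem_union.mp hv with hv | hv
      · exact hBG.1 hv
      · exact hXG.1 hv
    · intro e he
      rcases Finset.mem_union.mp he with he | he
      · exact hBG.2.1 he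
      · exact hXG.2.1 he
    · -- vert union
      show A.verts ∪ (B.verts ∪ X.verts) = G.verts
      rw [← Finset.union_assoc, hab.vert_union, hc.vert_union]
    · -- vert inter
      show A.verts ∩ (B.verts ∪ X.verts) = {A.t}
      ext v
      simp only [Finset.mem_inter, Finset.mem_union, Finset.mem_singleton]
      constructor
      · rintro ⟨h1, h2 | h2⟩
        · exact hABj v h1 h2
        · exact absurd (hAX v h1 h2) (by simp)
      · rintro rfl
        refine ⟨A.t_mem, Or.inl ?_⟩
        rw [hab.mid]
        exact B.s_mem
    · -- edges union
      show A.edges ∪ (B.edges ∪ X.edges) = G.edges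
      rw [← Finset.union_assoc, hab.edge_union, hc.edge_union]
    · -- edge disj
      show Disjoint A.edges (B.edges ∪ X.edges)
      rw [Finset.disjoint_union_right]
      refine ⟨hab.edge_disj, ?_⟩
      have : A.edges ⊆ H.edges := hab.sub1.2.1
      exact Finset.disjoint_of_subset_left this hc.edge_disj
    · rw [hc.src, hab.src]
    · exact hc.tgt
  · -- IsSeriesConn2 W B X
    refine ⟨⟨Finset.subset_union_left, Finset.subset_union_left, ?_⟩,
      ⟨Finset.subset_union_right, Finset.subset_union_right, ?_⟩, rfl, ?_, ?_, rfl, ?_, rfl, rfl⟩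
    · intro e he
      exact hBG.2.2 e he
    · intro e he
      exact hXG.2.2 e he
    · -- vert inter
      show B.verts ∩ X.verts = {B.t}
      ext v
      simp only [Finset.mem_inter, Finset.mem_singleton]
      constructor
      · rintro ⟨h1, h2⟩
        exact hBX v h1 h2
      · rintro rfl
        refine ⟨B.t_mem, ?_⟩
        rw [← hab.tgt]
        exact hHtX
    · -- mid
      show B.t = X.s
      rw [← hab.tgt, hc.mid]
    · -- disj
      have : B.edges ⊆ H.edges := hab.sub2.2.1
      exact Finset.disjoint_of_subset_left this hc.edge_disj

/-- Extend a series decomposition list by splitting its head. -/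
lemma series_list_split_head {G H A B : TTGraph} {rest : List TTGraph}
    (hl : IsSeriesConnList G (H :: rest)) (hab : IsSeriesConn2 H A B) :
    IsSeriesConnList G (A :: B :: rest) := by
  cases hl with
  | two hc =>
    obtain ⟨W, h1, h2⟩ := series_split_head hc hab
    exact .cons h1 (.two h2)
  | cons hc hl' =>
    obtain ⟨W, h1, h2⟩ := series_split_head hc hab
    exact .cons h1 (.cons h2 hl')

/-- Extend a series decomposition list by splitting its last element. -/
lemma series_list_split_last {G : TTGraph} {l : List TTGraph}
    (hl : IsSeriesConnList G l) :
    ∀ {L A B : TTGraph}, l.getLast? = some L → IsSeriesConn2 L A B →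
    ∃ l', IsSeriesConnList G l' ∧ l'.length = l.length + 1 ∧
      ∀ K ∈ l', K ∈ l ∨ K = A ∨ K = B := by
  induction hl with
  | two hc =>
    rename_i G0 H₁ H₂
    intro L A B hL hab
    have hL2 : L = H₂ := by
      have h0 : ([H₁, H₂] : List TTGraph).getLast? = some H₂ := rfl
      rw [h0] at hL
      exact (Option.some.inj hL).symm
    subst hL2
    refine ⟨[H₁, A, B], .cons hc (.two hab), by simp, ?_⟩
    intro K hK
    simp at hK
    rcases hK with rfl | rfl | rfl
    · simp
    · simp
    · simp
  | cons hc hl' ih =>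
    rename_i G0 G' H l0
    intro L A B hL hab
    have hne : l0 ≠ [] := by cases hl' <;> simp
    have hL' : l0.getLast? = some L := by
      rw [← hL]
      cases l0 with
      | nil => exact absurd rfl hne
      | cons a t => simp [List.getLast?_cons_cons]
    obtain ⟨l', h1, h2, h3⟩ := ih hL' hab
    refine ⟨H :: l', .cons hc h1, by simp [h2], ?_⟩
    intro K hK
    rcases List.mem_cons.mp hK with rfl | hK
    · simp
    · rcases h3 K hK with h | h
      · exact Or.inl (by simp [h])
      · exact Or.inr h

end Maximality
section Endparts

open SignedGraph

lemma head_parallel_or_k2 {G : TTGraph} {l : List TTGraph} (hparts : IsSeriesPartsOf G l)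
    {H : TTGraph} (hH : l.head? = some H) :
    IsSignedK2 H ∨ ∃ A B, IsParallelConn2 H A B ∧ IsSP A ∧ IsSP B := by
  obtain ⟨hlist, hsp, hmax⟩ := hparts
  obtain ⟨rest, rfl⟩ : ∃ rest, l = H :: rest := by
    cases l with
    | nil => simp at hH
    | cons a t =>
      simp at hH
      exact ⟨t, by rw [hH]⟩
  have hspH : IsSP H := hsp H (by simp)
  cases hspH with
  | k2 h => exact Or.inl h
  | parallel hconn hA hB =>
    rename_i A B
    exact Or.inr ⟨A, B, hconn, hA, hB⟩
  | series hconn hA hB =>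
    exfalso
    rename_i A B
    have hlist' := series_list_split_head hlist hconn
    have hsp' : ∀ K ∈ A :: B :: rest, IsSP K := by
      intro K hK
      simp at hK
      rcases hK with rfl | rfl | hK
      · exact hA
      · exact hB
      · exact hsp K (by simp [hK])
    have := hmax _ hlist' hsp'
    simp at this

lemma last_parallel_or_k2 {G : TTGraph} {l : List TTGraph} (hparts : IsSeriesPartsOf G l)
    {H : TTGraph} (hH : l.getLast? = some H) :
    IsSignedK2 H ∨ ∃ A B, IsParallelConn2 H A B ∧ IsSP A ∧ IsSP B := by
  obtain ⟨hlist, hsp, hmax⟩ := hparts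
  have hmem : H ∈ l := mem_of_getLast? hH
  have hspH : IsSP H := hsp H hmem
  cases hspH with
  | k2 h => exact Or.inl h
  | parallel hconn hA hB =>
    rename_i A B
    exact Or.inr ⟨A, B, hconn, hA, hB⟩
  | series hconn hA hB =>
    exfalso
    rename_i A B
    obtain ⟨l', hlist', hlen, hmem'⟩ := series_list_split_last hlist hH hconn
    have hsp' : ∀ K ∈ l', IsSP K := by
      intro K hK
      rcases hmem' K hK with h | rfl | rfl
      · exact hsp K h
      · exact hA
      · exact hB
    have := hmax _ hlist' hsp'
    omega

end Endparts

section SuffixCoverage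

open SignedGraph

/-- Coverage of an edge of a suffix chain: an entry path from the source
into an unbalanced cycle, such that the edge lies in the cycle or on the path. -/
lemma suffix_coverage {G' : TTGraph} {l : List TTGraph} (hchain : SChain G' l) :
    (∀ H ∈ l, IsSP H) →
    ∀ {L : TTGraph}, l.getLast? = some L →
    (∀ e ∈ L.edges, ∃ vs es, L.toSignedGraph.GC vs es ∧
      Odd (L.toSignedGraph.negCount es) ∧ e ∈ es) →
    ∀ e ∈ G'.edges,
      ∃ vsC esC x vs es, G'.toSignedGraph.GC vsC esC ∧
        Odd (G'.toSignedGraph.negCount esC) ∧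
        G'.toSignedGraph.GP G'.s x vs es ∧ x ∈ vsC ∧
        (∀ v ∈ vs, v ∈ vsC → v = x) ∧ (e ∈ esC ∨ e ∈ es) := by
  induction hchain with
  | single H =>
    intro hsp L hL hLcyc e he
    have hLH : L = H := by simpa using hL.symm
    subst hLH
    obtain ⟨vsC, esC, hC, hodd, hein⟩ := hLcyc e he
    obtain ⟨x, vs, es, hgp, hx, huniq⟩ := cycle_entry_from_s (hsp L (by simp)) hC
    exact ⟨vsC, esC, x, vs, es, hC, hodd, hgp, hx, huniq, Or.inl hein⟩
  | cons hc hl ih =>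
    rename_i G0 G'' H l0
    intro hsp L hL hLcyc e he
    have hspH : IsSP H := hsp H (by simp)
    have hsp0 : ∀ K ∈ l0, IsSP K := fun K hK => hsp K (by simp [hK])
    have hne : l0 ≠ [] := hl.ne_nil
    have hL' : l0.getLast? = some L := by
      rw [← hL]
      cases l0 with
      | nil => exact absurd rfl hne
      | cons a t => simp [List.getLast?_cons_cons]
    have hjunction : ∀ w ∈ H.verts, w ∈ G''.verts → w = H.t := by
      intro w hw1 hw2
      have : w ∈ H.verts ∩ G''.verts := Finset.mem_inter.mpr ⟨hw1, hw2⟩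
      rw [hc.vert_inter] at this
      simpa using this
    rw [← hc.edge_union] at he
    rcases Finset.mem_union.mp he with he | he
    · -- e in the head part
      obtain ⟨vsP, esP, hp, hein, _⟩ := sp_path_through hspH e he
      -- an unbalanced cycle with entry in the rest
      have hspG'' : IsSP G'' := hl.sp hsp0
      have hLmem : L ∈ l0 := mem_of_getLast? hL'
      have hLunb : L.toSignedGraph.IsUnbalanced := by
        obtain ⟨f, hf⟩ := sp_edges_nonempty (hsp0 L hLmem)
        obtain ⟨vs, es, hC, hodd, _⟩ := hLcyc f hf
        exact ⟨vs, es, hC.toIsCycle, hodd⟩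
      have hunbG'' : G''.toSignedGraph.IsUnbalanced :=
        unbalanced_lift (hl.last_subgraph hL') hLunb
      obtain ⟨vsC, esC, x, vsQ, esQ, hC, hodd, hQ, hx, huQ⟩ :=
        unbalanced_cycle_entry hspG'' hunbG''
      have hmP := hp.vmem
      have hmQ := hQ.vmem
      have hmC := hC.vmem
      have hpl := hp.lift hc.sub1
      have hQl := hQ.lift hc.sub2
      rw [← hc.mid] at hQl
      have hcat := hpl.concat hQl (fun w hw hw' => hjunction w (hmP w hw) (hmQ w hw'))
      refine ⟨vsC, esC, x, vsP ++ vsQ.tail, esP ++ esQ, hC.lift hc.sub2, ?_,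
        by rw [hc.src]; exact hcat, hx, ?_, Or.inr (by simp [hein])⟩
      · rwa [negCount_congr hc.sub2 hC.emem]
      · intro v hv hvC
        rcases List.mem_append.mp hv with hv | hv
        · have : v = H.t := hjunction v (hmP v hv) (hmC v hvC)
          subst this
          have : G''.s ∈ vsC := by rw [← hc.mid]; exact hvC
          have := huQ G''.s hQ.a_mem this
          rw [hc.mid]
          exact this
        · exact huQ v (List.mem_of_mem_tail hv) hvC
    · -- e in the rest: use the induction hypothesis and prepend a path across H
      obtain ⟨vsC, esC, x, vsQ, esQ, hC, hodd, hQ, hx, huQ, hor⟩ :=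
        ih hsp0 hL' hLcyc e he
      obtain ⟨vsP, esP, hp, _⟩ := sp_path hspH
      have hmP := hp.vmem
      have hmQ := hQ.vmem
      have hmC := hC.vmem
      have hpl := hp.lift hc.sub1
      have hQl := hQ.lift hc.sub2
      rw [← hc.mid] at hQl
      have hcat := hpl.concat hQl (fun w hw hw' => hjunction w (hmP w hw) (hmQ w hw'))
      refine ⟨vsC, esC, x, vsP ++ vsQ.tail, esP ++ esQ, hC.lift hc.sub2, ?_,
        by rw [hc.src]; exact hcat, hx, ?_, ?_⟩
      · rwa [negCount_congr hc.sub2 hC.emem]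
      · intro v hv hvC
        rcases List.mem_append.mp hv with hv | hv
        · have : v = H.t := hjunction v (hmP v hv) (hmC v hvC)
          subst this
          have : G''.s ∈ vsC := by rw [← hc.mid]; exact hvC
          have := huQ G''.s hQ.a_mem this
          rw [hc.mid]
          exact this
        · exact huQ v (List.mem_of_mem_tail hv) hvC
      · rcases hor with h | h
        · exact Or.inl h
        · exact Or.inr (by simp [h])

end SuffixCoverage
open SignedGraph

/-- If a signed series-parallel graph is of series type and
both of its endparts are unbalanced, then every edge is contained in a
barbell. -/
theorem series_type_unbalanced_endparts_edges_in_barbell (G : TTGraph)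
    (hSP : IsSP G) (hser : IsSeriesType G)
    (hend : ∀ H : TTGraph, IsEndpartOf H G → H.toSignedGraph.IsUnbalanced) :
    ∀ e ∈ G.edges, ∃ vs₁ es₁ vs₂ es₂ pvs pes : List ℕ,
      G.toSignedGraph.IsBarbell vs₁ es₁ vs₂ es₂ pvs pes ∧
      (e ∈ es₁ ∨ e ∈ es₂ ∨ e ∈ pes) := by
  intro e he
  obtain ⟨l, hparts⟩ := hser
  have hlist := hparts.1
  have hsp := hparts.2.1
  obtain ⟨G₁, rest, rfl⟩ : ∃ G₁ rest, l = G₁ :: rest := by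
    cases hlist <;> exact ⟨_, _, rfl⟩
  obtain ⟨X, hc, hchainX⟩ : ∃ X, IsSeriesConn2 G G₁ X ∧ SChain X rest := by
    cases hlist with
    | two hc => exact ⟨_, hc, .single _⟩
    | cons hc hl => exact ⟨_, hc, .of_list hl⟩
  have hrestne : rest ≠ [] := hchainX.ne_nil
  obtain ⟨L, hLlast⟩ : ∃ L, rest.getLast? = some L := by
    cases rest with
    | nil => exact absurd rfl hrestne
    | cons a t =>
      exact ⟨(a :: t).getLast (by simp), List.getLast?_eq_getLast _⟩
  have hheadl : (G₁ :: rest).head? = some G₁ := rfl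
  have hlastl : (G₁ :: rest).getLast? = some L := by
    cases rest with
    | nil => exact absurd rfl hrestne
    | cons a t => rw [List.getLast?_cons_cons]; exact hLlast
  have hunb₁ : G₁.toSignedGraph.IsUnbalanced := hend G₁ ⟨_, hparts, Or.inl hheadl⟩
  have hunbL : L.toSignedGraph.IsUnbalanced := hend L ⟨_, hparts, Or.inr hlastl⟩
  have hspG₁ : IsSP G₁ := hsp G₁ (by simp)
  have hsprest : ∀ K ∈ rest, IsSP K := fun K hK => hsp K (by simp [hK])
  have hspX : IsSP X := hchainX.sp hsprest
  rcases head_parallel_or_k2 hparts hheadl with hk | ⟨A, B, hpc, hA, hB⟩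
  · exact absurd hunb₁ (k2_not_unbalanced hk)
  rcases last_parallel_or_k2 hparts hlastl with hk | ⟨A', B', hpc', hA', hB'⟩
  · exact absurd hunbL (k2_not_unbalanced hk)
  have hG₁cyc := parallel_unbalanced_edge_cycle hpc hA hB hunb₁
  have hLcyc := parallel_unbalanced_edge_cycle hpc' hA' hB' hunbL
  rw [← hc.edge_union] at he
  rcases Finset.mem_union.mp he with he | he
  · -- the edge lies in the first endpart: it lies in an unbalanced cycle there
    obtain ⟨vs₁, es₁, hC₁, hodd₁, hein⟩ := hG₁cyc e he
    obtain ⟨x₁, vsR, esR, hR, hx₁, huR⟩ := cycle_exit_to_t hspG₁ hC₁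
    have hunbX : X.toSignedGraph.IsUnbalanced :=
      unbalanced_lift (hchainX.last_subgraph hLlast) hunbL
    obtain ⟨vsC, esC, x₂, vsQ, esQ, hC₂, hodd₂, hQ, hx₂, huQ⟩ :=
      unbalanced_cycle_entry hspX hunbX
    exact ⟨vs₁, es₁, vsC, esC, _, _,
      assemble_barbell hc hC₁ hodd₁ hC₂ hodd₂ hR hx₁ huR hQ hx₂ huQ, Or.inl hein⟩
  · -- the edge lies in the rest
    obtain ⟨vsC, esC, x, vsQ, esQ, hC, hodd, hQ, hx, huQ, hor⟩ :=
      suffix_coverage hchainX hsprest hLlast hLcyc e he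
    obtain ⟨vs₁, es₁, hC₁, hodd₁⟩ := unb_to_gc hunb₁
    obtain ⟨x₁, vsR, esR, hR, hx₁, huR⟩ := cycle_exit_to_t hspG₁ hC₁
    refine ⟨vs₁, es₁, vsC, esC, _, _,
      assemble_barbell hc hC₁ hodd₁ hC hodd hR hx₁ huR hQ hx huQ, ?_⟩
    rcases hor with h | h
    · exact Or.inr (Or.inl h)
    · exact Or.inr (Or.inr (by simp [h]))
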